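/- arXiv:2202.09309 — 3 statements merged into one kernel-verified Lean document; each statement's English description precedes it below -/
import Mathlib

section
/- If the pair of real-valued random variables (U,V) can be noninteractively simulated from an infinite number of samples of the pair of real-valued random variables (X,Y), then the Hirschfeld–Gebelein–Rényi maximal correlations satisfy ρ_M(X,Y) ≥ ρ_M(U,V). -/
open MeasureTheory

/-- Hirschfeld–Gebelein–Rényi maximal correlation of a joint law `μ` on `ℝ × ℝ`
(the value `0` is included to cover the degenerate case where no admissible `φ, ψ` exist). -/
noncomputable def maxCorr (μ : Measure (ℝ × ℝ)) : ℝ :=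
  sSup ({0} ∪ { r | ∃ φ ψ : ℝ → ℝ, Measurable φ ∧ Measurable ψ ∧
    (∫ p, φ p.1 ∂μ) = 0 ∧ (∫ p, (φ p.1) ^ 2 ∂μ) = 1 ∧
    (∫ p, ψ p.2 ∂μ) = 0 ∧ (∫ p, (ψ p.2) ^ 2 ∂μ) = 1 ∧
    r = ∫ p, φ p.1 * ψ p.2 ∂μ })

/-- Total variation distance between two laws on `ℝ²`. -/
noncomputable def dTV (μ ν : Measure (ℝ × ℝ)) : ℝ :=
  ⨆ D : { D : Set (ℝ × ℝ) // MeasurableSet D }, |(μ D.1).toReal - (ν D.1).toReal|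

/-- The uniform probability measure on `Fin m`. -/
noncomputable def unif (m : ℕ) : Measure (Fin m) := ((m : ENNReal))⁻¹ • Measure.count

/-- The joint law of `(f(X₁,…,X_k,W), g(Y₁,…,Y_k,Z))`, where `(X₁,Y₁),…,(X_k,Y_k)` are
i.i.d. with law `μ` and `W, Z` are uniform on `{1,…,m}`, independent of each other and of
the samples. -/
noncomputable def simLaw (μ : Measure (ℝ × ℝ)) (k m : ℕ)
    (f g : (Fin k → ℝ) × Fin m → ℝ) : Measure (ℝ × ℝ) :=
  Measure.map
    (fun ω : (Fin k → ℝ × ℝ) × (Fin m × Fin m) =>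
      (f (fun i => (ω.1 i).1, ω.2.1), g (fun i => (ω.1 i).2, ω.2.2)))
    ((Measure.pi fun _ : Fin k => μ).prod ((unif m).prod (unif m)))

/-- `(U,V)` (with joint law `ν`) can be noninteractively simulated from an infinite number
of samples of `(X,Y)` (with joint law `μ`). -/
def CanSimulate (μ ν : Measure (ℝ × ℝ)) : Prop :=
  ∃ (k mm : ℕ → ℕ) (f g : ∀ n : ℕ, (Fin (k n) → ℝ) × Fin (mm n) → ℝ),
    (∀ n, 0 < k n ∧ 0 < mm n ∧ Measurable (f n) ∧ Measurable (g n)) ∧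
    Filter.Tendsto (fun n => dTV ν (simLaw μ (k n) (mm n) (f n) (g n)))
      Filter.atTop (nhds 0)

/-! ### Proof development -/

section Aux
variable {Ω : Type*} [MeasurableSpace Ω] {P : Measure Ω}

lemma aux_int_of_sq (hP : IsFiniteMeasure P) {f : Ω → ℝ} (hf : AEStronglyMeasurable f P)
    (h2 : Integrable (fun ω => f ω ^ 2) P) : Integrable f P := by
  have hb : Integrable (fun ω => (1 + f ω ^ 2) / 2) P :=
    ((integrable_const (1 : ℝ)).add h2).div_const 2
  refine hb.mono' hf ?_
  filter_upwards with ω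
  rw [Real.norm_eq_abs]
  nlinarith [sq_nonneg (|f ω| - 1), sq_abs (f ω)]

lemma aux_int_mul {f g : Ω → ℝ} (hf : AEStronglyMeasurable f P) (hg : AEStronglyMeasurable g P)
    (h2f : Integrable (fun ω => f ω ^ 2) P) (h2g : Integrable (fun ω => g ω ^ 2) P) :
    Integrable (fun ω => f ω * g ω) P := by
  have hb : Integrable (fun ω => (f ω ^ 2 + g ω ^ 2) / 2) P := (h2f.add h2g).div_const 2
  refine hb.mono' (hf.mul hg) ?_
  filter_upwards with ω
  rw [Real.norm_eq_abs, abs_mul]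
  nlinarith [sq_nonneg (|f ω| - |g ω|), sq_abs (f ω), sq_abs (g ω), abs_nonneg (f ω),
    abs_nonneg (g ω)]

lemma aux_CS {f g : Ω → ℝ} (hf : AEStronglyMeasurable f P) (hg : AEStronglyMeasurable g P)
    (h2f : Integrable (fun ω => f ω ^ 2) P) (h2g : Integrable (fun ω => g ω ^ 2) P) :
    ∫ ω, f ω * g ω ∂P ≤
      Real.sqrt (∫ ω, f ω ^ 2 ∂P) * Real.sqrt (∫ ω, g ω ^ 2 ∂P) := by
  set A := ∫ ω, f ω ^ 2 ∂P with hA_def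
  set C := ∫ ω, g ω ^ 2 ∂P with hC_def
  set B := ∫ ω, f ω * g ω ∂P with hB_def
  have hA : 0 ≤ A := integral_nonneg fun ω => sq_nonneg _
  have hC : 0 ≤ C := integral_nonneg fun ω => sq_nonneg _
  have hfg : Integrable (fun ω => f ω * g ω) P := aux_int_mul hf hg h2f h2g
  rcases eq_or_lt_of_le hC with hC0 | hCpos
  · have hg0 : (fun ω => g ω ^ 2) =ᵐ[P] 0 := by
      exact (integral_eq_zero_iff_of_nonneg (fun ω => sq_nonneg (g ω)) h2g).mp hC0.symm
    have hfg0 : (fun ω => f ω * g ω) =ᵐ[P] 0 := by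
      filter_upwards [hg0] with ω h
      have h' : g ω ^ 2 = 0 := h
      have : g ω = 0 := (pow_eq_zero_iff (two_ne_zero)).mp h'
      simp [this]
    have hB0 : B = 0 := by rw [hB_def, integral_congr_ae hfg0]; simp
    rw [hB0]; positivity
  · have hCne : C ≠ 0 := ne_of_gt hCpos
    set t := B / C with ht
    have i1 : Integrable (fun ω => 2 * t * (f ω * g ω)) P := hfg.const_mul _
    have i2 : Integrable (fun ω => t ^ 2 * g ω ^ 2) P := h2g.const_mul _
    have h3 : Integrable (fun ω => f ω ^ 2 - 2 * t * (f ω * g ω)) P := h2f.sub i1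
    have E1 : ∫ ω, (f ω ^ 2 - 2 * t * (f ω * g ω)) + t ^ 2 * g ω ^ 2 ∂P =
        (∫ ω, f ω ^ 2 - 2 * t * (f ω * g ω) ∂P) + ∫ ω, t ^ 2 * g ω ^ 2 ∂P :=
      integral_add h3 i2
    have E2 : ∫ ω, f ω ^ 2 - 2 * t * (f ω * g ω) ∂P =
        (∫ ω, f ω ^ 2 ∂P) - ∫ ω, 2 * t * (f ω * g ω) ∂P := integral_sub h2f i1
    have E3 : ∫ ω, 2 * t * (f ω * g ω) ∂P = 2 * t * B := integral_const_mul _ _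
    have E4 : ∫ ω, t ^ 2 * g ω ^ 2 ∂P = t ^ 2 * C := integral_const_mul _ _
    have key : (0 : ℝ) ≤ A - 2 * t * B + t ^ 2 * C := by
      have k0 : (0 : ℝ) ≤ ∫ ω, (f ω ^ 2 - 2 * t * (f ω * g ω)) + t ^ 2 * g ω ^ 2 ∂P :=
        integral_nonneg fun ω => by show (0:ℝ) ≤ _; nlinarith [sq_nonneg (f ω - t * g ω)]
      rw [E1, E2, E3, E4] at k0
      linarith
    have e2 : A - 2 * t * B + t ^ 2 * C = A - B ^ 2 / C := by
      rw [ht]; field_simp; ring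
    rw [e2] at key
    have hB2 : B ^ 2 ≤ A * C := by
      have : B ^ 2 / C ≤ A := by linarith
      exact (div_le_iff₀ hCpos).mp this
    calc B ≤ |B| := le_abs_self B
      _ = Real.sqrt (B ^ 2) := (Real.sqrt_sq_eq_abs B).symm
      _ ≤ Real.sqrt (A * C) := Real.sqrt_le_sqrt hB2
      _ = Real.sqrt A * Real.sqrt C := Real.sqrt_mul hA C

lemma aux_sq_int_le (hP : IsProbabilityMeasure P) {f : Ω → ℝ} (hf : AEStronglyMeasurable f P)
    (h2 : Integrable (fun ω => f ω ^ 2) P) :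
    (∫ ω, f ω ∂P) ^ 2 ≤ ∫ ω, f ω ^ 2 ∂P := by
  have hfi : Integrable f P := aux_int_of_sq inferInstance hf h2
  set m := ∫ ω, f ω ∂P with hm
  have i1 : Integrable (fun ω => 2 * m * f ω) P := hfi.const_mul _
  have h3 : Integrable (fun ω => f ω ^ 2 - 2 * m * f ω) P := h2.sub i1
  have E1 : ∫ ω, (f ω ^ 2 - 2 * m * f ω) + m ^ 2 ∂P =
      (∫ ω, f ω ^ 2 - 2 * m * f ω ∂P) + ∫ ω, (m ^ 2 : ℝ) ∂P := integral_add h3 (integrable_const _)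
  have E2 : ∫ ω, f ω ^ 2 - 2 * m * f ω ∂P = (∫ ω, f ω ^ 2 ∂P) - ∫ ω, 2 * m * f ω ∂P :=
    integral_sub h2 i1
  have E3 : ∫ ω, 2 * m * f ω ∂P = 2 * m * m := integral_const_mul _ _
  have E4 : ∫ ω, (m ^ 2 : ℝ) ∂P = m ^ 2 := by simp
  have key : (0 : ℝ) ≤ ∫ ω, (f ω ^ 2 - 2 * m * f ω) + m ^ 2 ∂P :=
    integral_nonneg fun ω => by show (0:ℝ) ≤ _; nlinarith [sq_nonneg (f ω - m)]
  rw [E1, E2, E3, E4] at key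
  linarith

lemma aux_sqrt_add {p q r s : ℝ} (hp : 0 ≤ p) (hq : 0 ≤ q) (hr : 0 ≤ r) (hs : 0 ≤ s) :
    Real.sqrt (p * q) + Real.sqrt (r * s) ≤ Real.sqrt ((p + r) * (q + s)) := by
  rw [Real.sqrt_mul hp, Real.sqrt_mul hr]
  have h1 : (0:ℝ) ≤ Real.sqrt p * Real.sqrt q + Real.sqrt r * Real.sqrt s := by positivity
  rw [Real.le_sqrt h1 (by positivity)]
  have e1 := Real.sq_sqrt hp
  have e2 := Real.sq_sqrt hq
  have e3 := Real.sq_sqrt hr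
  have e4 := Real.sq_sqrt hs
  nlinarith [sq_nonneg (Real.sqrt p * Real.sqrt s - Real.sqrt r * Real.sqrt q),
    Real.sqrt_nonneg p, Real.sqrt_nonneg q, Real.sqrt_nonneg r, Real.sqrt_nonneg s]

end Aux

def CorrBound {Ω α β : Type*} [MeasurableSpace Ω] [MeasurableSpace α] [MeasurableSpace β]
    (P : Measure Ω) (X : Ω → α) (Y : Ω → β) (ρ : ℝ) : Prop :=
  ∀ F : α → ℝ, ∀ G : β → ℝ, Measurable F → Measurable G →
    Integrable (fun ω => F (X ω) ^ 2) P → Integrable (fun ω => G (Y ω) ^ 2) P →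
    ∫ ω, F (X ω) * G (Y ω) ∂P ≤ (∫ ω, F (X ω) ∂P) * (∫ ω, G (Y ω) ∂P) +
      ρ * (Real.sqrt ((∫ ω, F (X ω) ^ 2 ∂P) - (∫ ω, F (X ω) ∂P) ^ 2) *
          Real.sqrt ((∫ ω, G (Y ω) ^ 2 ∂P) - (∫ ω, G (Y ω) ∂P) ^ 2))

section CB
variable {Ω Ω' α β α' β' : Type*} [MeasurableSpace Ω] [MeasurableSpace Ω'] [MeasurableSpace α]
  [MeasurableSpace β] [MeasurableSpace α'] [MeasurableSpace β']

lemma CorrBound.comp {P : Measure Ω} {X : Ω → α} {Y : Ω → β} {ρ : ℝ}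
    (h : CorrBound P X Y ρ) {u : α → α'} {v : β → β'} (hu : Measurable u) (hv : Measurable v) :
    CorrBound P (fun ω => u (X ω)) (fun ω => v (Y ω)) ρ := by
  intro F G hF hG hF2 hG2
  exact h (F ∘ u) (G ∘ v) (hF.comp hu) (hG.comp hv) hF2 hG2

lemma CorrBound.comp_measurePreserving {P : Measure Ω} {Q : Measure Ω'} {T : Ω → Ω'}
    {X : Ω' → α} {Y : Ω' → β} {ρ : ℝ} (h : CorrBound Q X Y ρ)
    (hT : MeasurePreserving T P Q) (hX : Measurable X) (hY : Measurable Y) :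
    CorrBound P (fun ω => X (T ω)) (fun ω => Y (T ω)) ρ := by
  intro F G hF hG hF2 hG2
  have hTm := hT.measurable
  have key : ∀ (H : Ω' → ℝ), Measurable H → (∫ ω, H (T ω) ∂P) = ∫ ω', H ω' ∂Q := by
    intro H hH
    rw [← hT.map_eq, integral_map hTm.aemeasurable hH.aestronglyMeasurable]
  have hFX : Measurable fun ω' => F (X ω') := hF.comp hX
  have hGY : Measurable fun ω' => G (Y ω') := hG.comp hY
  have iF : Integrable (fun ω' => F (X ω') ^ 2) Q := by
    rw [← hT.map_eq]
    exact (integrable_map_measure (hFX.pow_const 2).aestronglyMeasurable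
      hTm.aemeasurable).mpr hF2
  have iG : Integrable (fun ω' => G (Y ω') ^ 2) Q := by
    rw [← hT.map_eq]
    exact (integrable_map_measure (hGY.pow_const 2).aestronglyMeasurable
      hTm.aemeasurable).mpr hG2
  have e1 : ∫ ω, F (X (T ω)) * G (Y (T ω)) ∂P = ∫ ω', F (X ω') * G (Y ω') ∂Q :=
    key _ (hFX.mul hGY)
  have e2 : ∫ ω, F (X (T ω)) ∂P = ∫ ω', F (X ω') ∂Q := key _ hFX
  have e3 : ∫ ω, G (Y (T ω)) ∂P = ∫ ω', G (Y ω') ∂Q := key _ hGY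
  have e4 : ∫ ω, F (X (T ω)) ^ 2 ∂P = ∫ ω', F (X ω') ^ 2 ∂Q := key _ (hFX.pow_const 2)
  have e5 : ∫ ω, G (Y (T ω)) ^ 2 ∂P = ∫ ω', G (Y ω') ^ 2 ∂Q := key _ (hGY.pow_const 2)
  rw [e1, e2, e3, e4, e5]
  exact h F G hF hG iF iG

lemma CorrBound.map {P : Measure Ω} {Φ : Ω → Ω'} {X : Ω' → α} {Y : Ω' → β} {ρ : ℝ}
    (hΦ : Measurable Φ) (hX : Measurable X) (hY : Measurable Y)
    (h : CorrBound P (fun ω => X (Φ ω)) (fun ω => Y (Φ ω)) ρ) :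
    CorrBound (Measure.map Φ P) X Y ρ := by
  intro F G hF hG hF2 hG2
  have hFX : Measurable fun ω' => F (X ω') := hF.comp hX
  have hGY : Measurable fun ω' => G (Y ω') := hG.comp hY
  have key : ∀ (H : Ω' → ℝ), Measurable H →
      (∫ ω', H ω' ∂(Measure.map Φ P)) = ∫ ω, H (Φ ω) ∂P := by
    intro H hH
    rw [integral_map hΦ.aemeasurable hH.aestronglyMeasurable]
  have iF : Integrable (fun ω => F (X (Φ ω)) ^ 2) P :=
    (integrable_map_measure (hFX.pow_const 2).aestronglyMeasurable hΦ.aemeasurable).mp hF2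
  have iG : Integrable (fun ω => G (Y (Φ ω)) ^ 2) P :=
    (integrable_map_measure (hGY.pow_const 2).aestronglyMeasurable hΦ.aemeasurable).mp hG2
  have e1 : ∫ ω', F (X ω') * G (Y ω') ∂(Measure.map Φ P) = ∫ ω, F (X (Φ ω)) * G (Y (Φ ω)) ∂P :=
    key _ (hFX.mul hGY)
  have e2 : ∫ ω', F (X ω') ∂(Measure.map Φ P) = ∫ ω, F (X (Φ ω)) ∂P := key _ hFX
  have e3 : ∫ ω', G (Y ω') ∂(Measure.map Φ P) = ∫ ω, G (Y (Φ ω)) ∂P := key _ hGY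
  have e4 : ∫ ω', F (X ω') ^ 2 ∂(Measure.map Φ P) = ∫ ω, F (X (Φ ω)) ^ 2 ∂P :=
    key _ (hFX.pow_const 2)
  have e5 : ∫ ω', G (Y ω') ^ 2 ∂(Measure.map Φ P) = ∫ ω, G (Y (Φ ω)) ^ 2 ∂P :=
    key _ (hGY.pow_const 2)
  rw [e1, e2, e3, e4, e5]
  exact h F G hF hG iF iG

end CB

section Tensor
variable {Ω₁ Ω₂ α₁ β₁ α₂ β₂ : Type*} [MeasurableSpace Ω₁] [MeasurableSpace Ω₂]
  [MeasurableSpace α₁] [MeasurableSpace β₁] [MeasurableSpace α₂] [MeasurableSpace β₂]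

lemma CorrBound.prod {P₁ : Measure Ω₁} {P₂ : Measure Ω₂}
    [IsProbabilityMeasure P₁] [IsProbabilityMeasure P₂]
    {X₁ : Ω₁ → α₁} {Y₁ : Ω₁ → β₁} {X₂ : Ω₂ → α₂} {Y₂ : Ω₂ → β₂}
    (hX₁ : Measurable X₁) (hY₁ : Measurable Y₁) (hX₂ : Measurable X₂) (hY₂ : Measurable Y₂)
    {ρ₁ ρ₂ : ℝ} (hρ₁ : 0 ≤ ρ₁) (hρ₂ : 0 ≤ ρ₂)
    (h₁ : CorrBound P₁ X₁ Y₁ ρ₁) (h₂ : CorrBound P₂ X₂ Y₂ ρ₂) :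
    CorrBound (P₁.prod P₂) (fun ω => (X₁ ω.1, X₂ ω.2)) (fun ω => (Y₁ ω.1, Y₂ ω.2))
      (max ρ₁ ρ₂) := by
  intro F G hF hG hF2' hG2'
  -- measurability of the composed maps on the product space
  have hFF : Measurable fun ω : Ω₁ × Ω₂ => F (X₁ ω.1, X₂ ω.2) :=
    hF.comp ((hX₁.comp measurable_fst).prodMk (hX₂.comp measurable_snd))
  have hGG : Measurable fun ω : Ω₁ × Ω₂ => G (Y₁ ω.1, Y₂ ω.2) :=
    hG.comp ((hY₁.comp measurable_fst).prodMk (hY₂.comp measurable_snd))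
  have hF2 : Integrable (fun ω : Ω₁ × Ω₂ => F (X₁ ω.1, X₂ ω.2) ^ 2) (P₁.prod P₂) := hF2'
  have hG2 : Integrable (fun ω : Ω₁ × Ω₂ => G (Y₁ ω.1, Y₂ ω.2) ^ 2) (P₁.prod P₂) := hG2'
  have hFGi : Integrable (fun ω : Ω₁ × Ω₂ => F (X₁ ω.1, X₂ ω.2) * G (Y₁ ω.1, Y₂ ω.2))
      (P₁.prod P₂) :=
    aux_int_mul hFF.aestronglyMeasurable hGG.aestronglyMeasurable hF2 hG2
  -- conditional means and variances
  set Fb : α₂ → ℝ := fun a => ∫ ω₁, F (X₁ ω₁, a) ∂P₁ with hFb_def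
  set Gb : β₂ → ℝ := fun b => ∫ ω₁, G (Y₁ ω₁, b) ∂P₁ with hGb_def
  set qF : α₂ → ℝ := fun a => ∫ ω₁, F (X₁ ω₁, a) ^ 2 ∂P₁ with hqF_def
  set qG : β₂ → ℝ := fun b => ∫ ω₁, G (Y₁ ω₁, b) ^ 2 ∂P₁ with hqG_def
  set sF : α₂ → ℝ := fun a => Real.sqrt (qF a - Fb a ^ 2) with hsF_def
  set sG : β₂ → ℝ := fun b => Real.sqrt (qG b - Gb b ^ 2) with hsG_def
  have hFm : Measurable fun z : Ω₁ × α₂ => F (X₁ z.1, z.2) :=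
    hF.comp ((hX₁.comp measurable_fst).prodMk measurable_snd)
  have hGm : Measurable fun z : Ω₁ × β₂ => G (Y₁ z.1, z.2) :=
    hG.comp ((hY₁.comp measurable_fst).prodMk measurable_snd)
  have hFb : Measurable Fb := hFm.stronglyMeasurable.integral_prod_left'.measurable
  have hGb : Measurable Gb := hGm.stronglyMeasurable.integral_prod_left'.measurable
  have hqF : Measurable qF :=
    (hFm.pow_const 2).stronglyMeasurable.integral_prod_left'.measurable
  have hqG : Measurable qG :=
    (hGm.pow_const 2).stronglyMeasurable.integral_prod_left'.measurable
  have hsF : Measurable sF := (hqF.sub (hFb.pow_const 2)).sqrt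
  have hsG : Measurable sG := (hqG.sub (hGb.pow_const 2)).sqrt
  -- a.e. slice integrability
  have aeF2 : ∀ᵐ ω₂ ∂P₂, Integrable (fun ω₁ => F (X₁ ω₁, X₂ ω₂) ^ 2) P₁ :=
    hF2.prod_left_ae
  have aeG2 : ∀ᵐ ω₂ ∂P₂, Integrable (fun ω₁ => G (Y₁ ω₁, Y₂ ω₂) ^ 2) P₁ :=
    hG2.prod_left_ae
  -- pointwise conditional bounds
  have aeFb2 : ∀ᵐ ω₂ ∂P₂, Fb (X₂ ω₂) ^ 2 ≤ qF (X₂ ω₂) := by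
    filter_upwards [aeF2] with ω₂ h2
    exact aux_sq_int_le inferInstance
      ((hF.comp (hX₁.prodMk measurable_const)).aestronglyMeasurable) h2
  have aeGb2 : ∀ᵐ ω₂ ∂P₂, Gb (Y₂ ω₂) ^ 2 ≤ qG (Y₂ ω₂) := by
    filter_upwards [aeG2] with ω₂ h2
    exact aux_sq_int_le inferInstance
      ((hG.comp (hY₁.prodMk measurable_const)).aestronglyMeasurable) h2
  have aeKey : ∀ᵐ ω₂ ∂P₂,
      (∫ ω₁, F (X₁ ω₁, X₂ ω₂) * G (Y₁ ω₁, Y₂ ω₂) ∂P₁) ≤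
        Fb (X₂ ω₂) * Gb (Y₂ ω₂) + ρ₁ * (sF (X₂ ω₂) * sG (Y₂ ω₂)) := by
    filter_upwards [aeF2, aeG2] with ω₂ h2f h2g
    exact h₁ (fun a₁ => F (a₁, X₂ ω₂)) (fun b₁ => G (b₁, Y₂ ω₂))
      (hF.comp (measurable_id.prodMk measurable_const))
      (hG.comp (measurable_id.prodMk measurable_const)) h2f h2g
  -- integrability on the second factor
  have intI : Integrable (fun ω₂ => ∫ ω₁, F (X₁ ω₁, X₂ ω₂) * G (Y₁ ω₁, Y₂ ω₂) ∂P₁) P₂ :=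
    hFGi.integral_prod_right
  have intQF : Integrable (fun ω₂ => qF (X₂ ω₂)) P₂ := hF2.integral_prod_right
  have intQG : Integrable (fun ω₂ => qG (Y₂ ω₂)) P₂ := hG2.integral_prod_right
  have intFb2 : Integrable (fun ω₂ => Fb (X₂ ω₂) ^ 2) P₂ := by
    refine intQF.mono' (((hFb.comp hX₂).pow_const 2).aestronglyMeasurable) ?_
    filter_upwards [aeFb2] with ω₂ hb
    rw [Real.norm_eq_abs, abs_of_nonneg (sq_nonneg _)]; exact hb
  have intGb2 : Integrable (fun ω₂ => Gb (Y₂ ω₂) ^ 2) P₂ := by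
    refine intQG.mono' (((hGb.comp hY₂).pow_const 2).aestronglyMeasurable) ?_
    filter_upwards [aeGb2] with ω₂ hb
    rw [Real.norm_eq_abs, abs_of_nonneg (sq_nonneg _)]; exact hb
  have intSF2 : Integrable (fun ω₂ => sF (X₂ ω₂) ^ 2) P₂ := by
    refine (intQF.add intFb2).mono'
      (((hsF.comp hX₂).pow_const 2).aestronglyMeasurable) ?_
    filter_upwards [aeFb2] with ω₂ hb
    rw [Real.norm_eq_abs, abs_of_nonneg (sq_nonneg _), hsF_def]
    have h1 : qF (X₂ ω₂) - Fb (X₂ ω₂) ^ 2 ≤ qF (X₂ ω₂) + Fb (X₂ ω₂) ^ 2 := by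
      nlinarith [sq_nonneg (Fb (X₂ ω₂))]
    calc Real.sqrt (qF (X₂ ω₂) - Fb (X₂ ω₂) ^ 2) ^ 2
        = qF (X₂ ω₂) - Fb (X₂ ω₂) ^ 2 := Real.sq_sqrt (by linarith [hb])
      _ ≤ qF (X₂ ω₂) + Fb (X₂ ω₂) ^ 2 := h1
  have intSG2 : Integrable (fun ω₂ => sG (Y₂ ω₂) ^ 2) P₂ := by
    refine (intQG.add intGb2).mono'
      (((hsG.comp hY₂).pow_const 2).aestronglyMeasurable) ?_
    filter_upwards [aeGb2] with ω₂ hb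
    rw [Real.norm_eq_abs, abs_of_nonneg (sq_nonneg _), hsG_def]
    have h1 : qG (Y₂ ω₂) - Gb (Y₂ ω₂) ^ 2 ≤ qG (Y₂ ω₂) + Gb (Y₂ ω₂) ^ 2 := by
      nlinarith [sq_nonneg (Gb (Y₂ ω₂))]
    calc Real.sqrt (qG (Y₂ ω₂) - Gb (Y₂ ω₂) ^ 2) ^ 2
        = qG (Y₂ ω₂) - Gb (Y₂ ω₂) ^ 2 := Real.sq_sqrt (by linarith [hb])
      _ ≤ qG (Y₂ ω₂) + Gb (Y₂ ω₂) ^ 2 := h1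
  have intFbGb : Integrable (fun ω₂ => Fb (X₂ ω₂) * Gb (Y₂ ω₂)) P₂ :=
    aux_int_mul (hFb.comp hX₂).aestronglyMeasurable (hGb.comp hY₂).aestronglyMeasurable
      intFb2 intGb2
  have intSFSG : Integrable (fun ω₂ => sF (X₂ ω₂) * sG (Y₂ ω₂)) P₂ :=
    aux_int_mul (hsF.comp hX₂).aestronglyMeasurable (hsG.comp hY₂).aestronglyMeasurable
      intSF2 intSG2
  -- step 1 : Fubini + conditional bound
  have step1 : ∫ ω : Ω₁ × Ω₂, F (X₁ ω.1, X₂ ω.2) * G (Y₁ ω.1, Y₂ ω.2) ∂(P₁.prod P₂) ≤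
      (∫ ω₂, Fb (X₂ ω₂) * Gb (Y₂ ω₂) ∂P₂) + ρ₁ * ∫ ω₂, sF (X₂ ω₂) * sG (Y₂ ω₂) ∂P₂ := by
    rw [integral_prod_symm _ hFGi]
    calc ∫ ω₂, ∫ ω₁, F (X₁ ω₁, X₂ ω₂) * G (Y₁ ω₁, Y₂ ω₂) ∂P₁ ∂P₂
        ≤ ∫ ω₂, Fb (X₂ ω₂) * Gb (Y₂ ω₂) + ρ₁ * (sF (X₂ ω₂) * sG (Y₂ ω₂)) ∂P₂ :=
          integral_mono_ae intI (intFbGb.add (intSFSG.const_mul ρ₁)) aeKey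
      _ = (∫ ω₂, Fb (X₂ ω₂) * Gb (Y₂ ω₂) ∂P₂) + ρ₁ * ∫ ω₂, sF (X₂ ω₂) * sG (Y₂ ω₂) ∂P₂ := by
          rw [integral_add intFbGb (intSFSG.const_mul ρ₁), integral_const_mul]
  -- abbreviations
  set A := ∫ ω : Ω₁ × Ω₂, F (X₁ ω.1, X₂ ω.2) ^ 2 ∂(P₁.prod P₂) with hA_def
  set B := ∫ ω : Ω₁ × Ω₂, G (Y₁ ω.1, Y₂ ω.2) ^ 2 ∂(P₁.prod P₂) with hB_def
  set a := ∫ ω : Ω₁ × Ω₂, F (X₁ ω.1, X₂ ω.2) ∂(P₁.prod P₂) with ha_def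
  set b := ∫ ω : Ω₁ × Ω₂, G (Y₁ ω.1, Y₂ ω.2) ∂(P₁.prod P₂) with hb_def
  set mF := ∫ ω₂, Fb (X₂ ω₂) ^ 2 ∂P₂ with hmF_def
  set mG := ∫ ω₂, Gb (Y₂ ω₂) ^ 2 ∂P₂ with hmG_def
  -- Fubini identities
  have intFF : Integrable (fun ω : Ω₁ × Ω₂ => F (X₁ ω.1, X₂ ω.2)) (P₁.prod P₂) :=
    aux_int_of_sq inferInstance hFF.aestronglyMeasurable hF2
  have intGG : Integrable (fun ω : Ω₁ × Ω₂ => G (Y₁ ω.1, Y₂ ω.2)) (P₁.prod P₂) :=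
    aux_int_of_sq inferInstance hGG.aestronglyMeasurable hG2
  have idA : ∫ ω₂, qF (X₂ ω₂) ∂P₂ = A := (integral_prod_symm _ hF2).symm
  have idB : ∫ ω₂, qG (Y₂ ω₂) ∂P₂ = B := (integral_prod_symm _ hG2).symm
  have ida : ∫ ω₂, Fb (X₂ ω₂) ∂P₂ = a := (integral_prod_symm _ intFF).symm
  have idb : ∫ ω₂, Gb (Y₂ ω₂) ∂P₂ = b := (integral_prod_symm _ intGG).symm
  have idSF : ∫ ω₂, sF (X₂ ω₂) ^ 2 ∂P₂ = A - mF := by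
    have e : (fun ω₂ => sF (X₂ ω₂) ^ 2) =ᵐ[P₂]
        fun ω₂ => qF (X₂ ω₂) - Fb (X₂ ω₂) ^ 2 := by
      filter_upwards [aeFb2] with ω₂ hb2
      rw [hsF_def]
      exact Real.sq_sqrt (by linarith)
    rw [integral_congr_ae e, integral_sub intQF intFb2, idA]
  have idSG : ∫ ω₂, sG (Y₂ ω₂) ^ 2 ∂P₂ = B - mG := by
    have e : (fun ω₂ => sG (Y₂ ω₂) ^ 2) =ᵐ[P₂]
        fun ω₂ => qG (Y₂ ω₂) - Gb (Y₂ ω₂) ^ 2 := by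
      filter_upwards [aeGb2] with ω₂ hb2
      rw [hsG_def]
      exact Real.sq_sqrt (by linarith)
    rw [integral_congr_ae e, integral_sub intQG intGb2, idB]
  -- nonnegativity facts
  have hAmF : 0 ≤ A - mF := by
    rw [← idSF]; exact integral_nonneg fun ω₂ => sq_nonneg _
  have hBmG : 0 ≤ B - mG := by
    rw [← idSG]; exact integral_nonneg fun ω₂ => sq_nonneg _
  have mFbX : AEStronglyMeasurable (fun ω₂ => Fb (X₂ ω₂)) P₂ :=
    (hFb.comp hX₂).aestronglyMeasurable
  have mGbY : AEStronglyMeasurable (fun ω₂ => Gb (Y₂ ω₂)) P₂ :=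
    (hGb.comp hY₂).aestronglyMeasurable
  have msFX : AEStronglyMeasurable (fun ω₂ => sF (X₂ ω₂)) P₂ :=
    (hsF.comp hX₂).aestronglyMeasurable
  have msGY : AEStronglyMeasurable (fun ω₂ => sG (Y₂ ω₂)) P₂ :=
    (hsG.comp hY₂).aestronglyMeasurable
  have hmFa : 0 ≤ mF - a ^ 2 := by
    have := aux_sq_int_le inferInstance mFbX intFb2
    rw [ida] at this
    linarith
  have hmGb : 0 ≤ mG - b ^ 2 := by
    have := aux_sq_int_le inferInstance mGbY intGb2
    rw [idb] at this
    linarith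
  -- step 2 : bound the two second-level terms
  have step2 : (∫ ω₂, Fb (X₂ ω₂) * Gb (Y₂ ω₂) ∂P₂) ≤
      a * b + ρ₂ * (Real.sqrt (mF - a ^ 2) * Real.sqrt (mG - b ^ 2)) := by
    have := h₂ Fb Gb hFb hGb intFb2 intGb2
    rw [ida, idb] at this
    exact this
  have step3 : (∫ ω₂, sF (X₂ ω₂) * sG (Y₂ ω₂) ∂P₂) ≤
      Real.sqrt (A - mF) * Real.sqrt (B - mG) := by
    have := aux_CS msFX msGY intSF2 intSG2
    rw [idSF, idSG] at this
    exact this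
  -- final algebra
  show ∫ ω : Ω₁ × Ω₂, F (X₁ ω.1, X₂ ω.2) * G (Y₁ ω.1, Y₂ ω.2) ∂(P₁.prod P₂) ≤
      a * b + max ρ₁ ρ₂ * (Real.sqrt (A - a ^ 2) * Real.sqrt (B - b ^ 2))
  have hρmax : 0 ≤ max ρ₁ ρ₂ := le_max_of_le_left hρ₁
  have sqnn : ∀ x : ℝ, 0 ≤ Real.sqrt x := Real.sqrt_nonneg
  have key : ρ₂ * (Real.sqrt (mF - a ^ 2) * Real.sqrt (mG - b ^ 2)) +
      ρ₁ * (Real.sqrt (A - mF) * Real.sqrt (B - mG)) ≤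
      max ρ₁ ρ₂ * (Real.sqrt (A - a ^ 2) * Real.sqrt (B - b ^ 2)) := by
    have h1 : ρ₂ * (Real.sqrt (mF - a ^ 2) * Real.sqrt (mG - b ^ 2)) +
        ρ₁ * (Real.sqrt (A - mF) * Real.sqrt (B - mG)) ≤
        max ρ₁ ρ₂ * (Real.sqrt (mF - a ^ 2) * Real.sqrt (mG - b ^ 2) +
          Real.sqrt (A - mF) * Real.sqrt (B - mG)) := by
      have b1 : ρ₂ * (Real.sqrt (mF - a ^ 2) * Real.sqrt (mG - b ^ 2)) ≤
          max ρ₁ ρ₂ * (Real.sqrt (mF - a ^ 2) * Real.sqrt (mG - b ^ 2)) :=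
        mul_le_mul_of_nonneg_right (le_max_right _ _) (by positivity)
      have b2 : ρ₁ * (Real.sqrt (A - mF) * Real.sqrt (B - mG)) ≤
          max ρ₁ ρ₂ * (Real.sqrt (A - mF) * Real.sqrt (B - mG)) :=
        mul_le_mul_of_nonneg_right (le_max_left _ _) (by positivity)
      linarith [b1, b2]
    have h2 : Real.sqrt (mF - a ^ 2) * Real.sqrt (mG - b ^ 2) +
        Real.sqrt (A - mF) * Real.sqrt (B - mG) ≤
        Real.sqrt (A - a ^ 2) * Real.sqrt (B - b ^ 2) := by
      have e1 : Real.sqrt (mF - a ^ 2) * Real.sqrt (mG - b ^ 2) =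
          Real.sqrt ((mF - a ^ 2) * (mG - b ^ 2)) := (Real.sqrt_mul hmFa _).symm
      have e2 : Real.sqrt (A - mF) * Real.sqrt (B - mG) =
          Real.sqrt ((A - mF) * (B - mG)) := (Real.sqrt_mul hAmF _).symm
      have e3 : Real.sqrt (A - a ^ 2) * Real.sqrt (B - b ^ 2) =
          Real.sqrt ((A - a ^ 2) * (B - b ^ 2)) := (Real.sqrt_mul (by linarith) _).symm
      rw [e1, e2, e3]
      have := aux_sqrt_add hmFa hmGb hAmF hBmG
      convert this using 3 <;> ring
    calc ρ₂ * (Real.sqrt (mF - a ^ 2) * Real.sqrt (mG - b ^ 2)) +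
        ρ₁ * (Real.sqrt (A - mF) * Real.sqrt (B - mG)) ≤
        max ρ₁ ρ₂ * (Real.sqrt (mF - a ^ 2) * Real.sqrt (mG - b ^ 2) +
          Real.sqrt (A - mF) * Real.sqrt (B - mG)) := h1
      _ ≤ max ρ₁ ρ₂ * (Real.sqrt (A - a ^ 2) * Real.sqrt (B - b ^ 2)) :=
        mul_le_mul_of_nonneg_left h2 hρmax
  calc ∫ ω : Ω₁ × Ω₂, F (X₁ ω.1, X₂ ω.2) * G (Y₁ ω.1, Y₂ ω.2) ∂(P₁.prod P₂) ≤
      (∫ ω₂, Fb (X₂ ω₂) * Gb (Y₂ ω₂) ∂P₂) + ρ₁ * ∫ ω₂, sF (X₂ ω₂) * sG (Y₂ ω₂) ∂P₂ := step1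
    _ ≤ (a * b + ρ₂ * (Real.sqrt (mF - a ^ 2) * Real.sqrt (mG - b ^ 2))) +
        ρ₁ * (Real.sqrt (A - mF) * Real.sqrt (B - mG)) := by
        have := mul_le_mul_of_nonneg_left step3 hρ₁
        linarith [step2, this]
    _ ≤ a * b + max ρ₁ ρ₂ * (Real.sqrt (A - a ^ 2) * Real.sqrt (B - b ^ 2)) := by
        linarith [key]

end Tensor


lemma unif_prob {m : ℕ} (hm : 0 < m) : IsProbabilityMeasure (unif m) := by
  constructor
  rw [unif, Measure.smul_apply, Measure.count_univ, smul_eq_mul]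
  simp only [ENat.card_eq_coe_fintype_card, Fintype.card_fin, ENat.toENNReal_coe]
  exact ENNReal.inv_mul_cancel (by exact_mod_cast hm.ne') (ENNReal.natCast_ne_top m)

lemma corrBound_unif {m : ℕ} (hm : 0 < m) :
    CorrBound ((unif m).prod (unif m)) Prod.fst Prod.snd 0 := by
  haveI := unif_prob hm
  intro F G hF hG hF2 hG2
  have key : ∫ p : Fin m × Fin m, F p.1 * G p.2 ∂((unif m).prod (unif m)) =
      (∫ p : Fin m × Fin m, F p.1 ∂((unif m).prod (unif m))) *
      (∫ p : Fin m × Fin m, G p.2 ∂((unif m).prod (unif m))) := by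
    rw [integral_prod _ (Integrable.of_finite), integral_prod _ (Integrable.of_finite),
      integral_prod _ (Integrable.of_finite)]
    simp [integral_const_mul, integral_mul_const, integral_const, measure_univ]
  rw [key]
  simp

lemma CorrBound.congr_fun {Ω α β : Type*} [MeasurableSpace Ω] [MeasurableSpace α]
    [MeasurableSpace β] {P : Measure Ω} {X X' : Ω → α} {Y Y' : Ω → β} {ρ : ℝ}
    (h : CorrBound P X Y ρ) (hX : X = X') (hY : Y = Y') : CorrBound P X' Y' ρ := hX ▸ hY ▸ h

lemma corrBound_pi {μ : Measure (ℝ × ℝ)} [IsProbabilityMeasure μ] {ρ : ℝ} (hρ : 0 ≤ ρ)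
    (h : CorrBound μ Prod.fst Prod.snd ρ) (k : ℕ) :
    CorrBound (Measure.pi fun _ : Fin k => μ)
      (fun v i => (v i).1) (fun v i => (v i).2) ρ := by
  induction k with
  | zero =>
    intro F G hF hG hF2 hG2
    have hconst : ∀ (H : (Fin 0 → ℝ × ℝ) → ℝ),
        ∫ ω, H ω ∂(Measure.pi fun _ : Fin 0 => μ) = H default := by
      intro H
      have : H = fun _ => H default := funext fun ω => by rw [Subsingleton.elim ω default]
      rw [this, integral_const, probReal_univ]
      simp
    have e1 := hconst fun ω => F (fun i => (ω i).1) * G (fun i => (ω i).2)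
    have e2 := hconst fun ω => F (fun i => (ω i).1)
    have e3 := hconst fun ω => G (fun i => (ω i).2)
    have e4 := hconst fun ω => F (fun i => (ω i).1) ^ 2
    have e5 := hconst fun ω => G (fun i => (ω i).2) ^ 2
    calc ∫ ω, F (fun i => (ω i).1) * G (fun i => (ω i).2) ∂(Measure.pi fun _ : Fin 0 => μ)
        = F (fun i => ((default : Fin 0 → ℝ × ℝ) i).1) *
          G (fun i => ((default : Fin 0 → ℝ × ℝ) i).2) := e1
      _ ≤ (∫ ω, F (fun i => (ω i).1) ∂(Measure.pi fun _ : Fin 0 => μ)) *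
          (∫ ω, G (fun i => (ω i).2) ∂(Measure.pi fun _ : Fin 0 => μ)) +
          ρ * (Real.sqrt ((∫ ω, F (fun i => (ω i).1) ^ 2 ∂(Measure.pi fun _ : Fin 0 => μ)) -
              (∫ ω, F (fun i => (ω i).1) ∂(Measure.pi fun _ : Fin 0 => μ)) ^ 2) *
            Real.sqrt ((∫ ω, G (fun i => (ω i).2) ^ 2 ∂(Measure.pi fun _ : Fin 0 => μ)) -
              (∫ ω, G (fun i => (ω i).2) ∂(Measure.pi fun _ : Fin 0 => μ)) ^ 2)) := by
          rw [e2, e3, e4, e5, sub_self, Real.sqrt_zero]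
          simp
  | succ k ih =>
    have hX1 : Measurable fun v : Fin k → ℝ × ℝ => (fun i => (v i).1 : Fin k → ℝ) :=
      measurable_pi_lambda _ fun i => (measurable_pi_apply i).fst
    have hY1 : Measurable fun v : Fin k → ℝ × ℝ => (fun i => (v i).2 : Fin k → ℝ) :=
      measurable_pi_lambda _ fun i => (measurable_pi_apply i).snd
    have htensor := CorrBound.prod (P₁ := μ) (P₂ := Measure.pi fun _ : Fin k => μ)
      measurable_fst measurable_snd hX1 hY1 hρ hρ h ih
    rw [max_self] at htensor
    have hu : Measurable fun p : ℝ × (Fin k → ℝ) => (Fin.cons p.1 p.2 : Fin (k + 1) → ℝ) := by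
      apply measurable_pi_lambda
      intro i
      refine Fin.cases ?_ ?_ i
      · simpa using (measurable_fst : Measurable fun p : ℝ × (Fin k → ℝ) => p.1)
      · intro j
        simpa [Function.comp_def] using ((measurable_pi_apply j).comp
          (measurable_snd : Measurable fun p : ℝ × (Fin k → ℝ) => p.2))
    have hcomp := htensor.comp hu hu
    have hMP : MeasurePreserving (MeasurableEquiv.piFinSuccAbove (fun _ : Fin (k + 1) => ℝ × ℝ) 0)
        (Measure.pi fun _ : Fin (k + 1) => μ)
        (μ.prod (Measure.pi fun _ : Fin k => μ)) :=
      measurePreserving_piFinSuccAbove (fun _ : Fin (k + 1) => μ) 0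
    have hXm : Measurable fun ω : (ℝ × ℝ) × (Fin k → ℝ × ℝ) =>
        (Fin.cons ω.1.1 (fun i => (ω.2 i).1) : Fin (k + 1) → ℝ) :=
      hu.comp ((measurable_fst.fst).prodMk (hX1.comp measurable_snd))
    have hYm : Measurable fun ω : (ℝ × ℝ) × (Fin k → ℝ × ℝ) =>
        (Fin.cons ω.1.2 (fun i => (ω.2 i).2) : Fin (k + 1) → ℝ) :=
      hu.comp ((measurable_fst.snd).prodMk (hY1.comp measurable_snd))
    have htrans := hcomp.comp_measurePreserving hMP hXm hYm
    refine htrans.congr_fun ?_ ?_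
    · funext v
      funext i
      show (Fin.cons ((v 0).1) (fun j => (v (Fin.succAbove 0 j)).1) : Fin (k + 1) → ℝ) i
        = (v i).1
      refine Fin.cases ?_ ?_ i
      · simp
      · intro j
        simp [Fin.succAbove]
    · funext v
      funext i
      show (Fin.cons ((v 0).2) (fun j => (v (Fin.succAbove 0 j)).2) : Fin (k + 1) → ℝ) i
        = (v i).2
      refine Fin.cases ?_ ?_ i
      · simp
      · intro j
        simp [Fin.succAbove]


section MaxCorr
variable {μ : Measure (ℝ × ℝ)} [IsProbabilityMeasure μ]

lemma maxCorr_mem_le : ∀ r ∈ ({0} ∪ { r | ∃ φ ψ : ℝ → ℝ, Measurable φ ∧ Measurable ψ ∧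
    (∫ p, φ p.1 ∂μ) = 0 ∧ (∫ p, (φ p.1) ^ 2 ∂μ) = 1 ∧
    (∫ p, ψ p.2 ∂μ) = 0 ∧ (∫ p, (ψ p.2) ^ 2 ∂μ) = 1 ∧
    r = ∫ p, φ p.1 * ψ p.2 ∂μ } : Set ℝ), r ≤ 1 := by
  rintro r (hr | ⟨φ, ψ, hφ, hψ, hφ1, hφ2, hψ1, hψ2, rfl⟩)
  · rw [Set.mem_singleton_iff] at hr
    rw [hr]; exact zero_le_one
  · have hφint : Integrable (fun p : ℝ × ℝ => φ p.1 ^ 2) μ := by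
      by_contra hc
      rw [integral_undef hc] at hφ2
      exact one_ne_zero hφ2.symm
    have hψint : Integrable (fun p : ℝ × ℝ => ψ p.2 ^ 2) μ := by
      by_contra hc
      rw [integral_undef hc] at hψ2
      exact one_ne_zero hψ2.symm
    have mφ : AEStronglyMeasurable (fun p : ℝ × ℝ => φ p.1) μ :=
      (hφ.comp measurable_fst).aestronglyMeasurable
    have mψ : AEStronglyMeasurable (fun p : ℝ × ℝ => ψ p.2) μ :=
      (hψ.comp measurable_snd).aestronglyMeasurable
    have := aux_CS (P := μ) mφ mψ hφint hψint
    rw [hφ2, hψ2, Real.sqrt_one, mul_one] at this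
    simpa using this

lemma maxCorr_bddAbove : BddAbove ({0} ∪ { r | ∃ φ ψ : ℝ → ℝ, Measurable φ ∧ Measurable ψ ∧
    (∫ p, φ p.1 ∂μ) = 0 ∧ (∫ p, (φ p.1) ^ 2 ∂μ) = 1 ∧
    (∫ p, ψ p.2 ∂μ) = 0 ∧ (∫ p, (ψ p.2) ^ 2 ∂μ) = 1 ∧
    r = ∫ p, φ p.1 * ψ p.2 ∂μ } : Set ℝ) :=
  ⟨1, fun r hr => maxCorr_mem_le r hr⟩

lemma maxCorr_nonneg : 0 ≤ maxCorr μ :=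
  le_csSup maxCorr_bddAbove (Or.inl rfl)

lemma aux_var_expand {Ω : Type*} [MeasurableSpace Ω] {P : Measure Ω} [IsProbabilityMeasure P]
    {f : Ω → ℝ} (hf : AEStronglyMeasurable f P) (h2 : Integrable (fun ω => f ω ^ 2) P) :
    ∫ ω, (f ω - ∫ ω', f ω' ∂P) ^ 2 ∂P = (∫ ω, f ω ^ 2 ∂P) - (∫ ω, f ω ∂P) ^ 2 := by
  have hfi : Integrable f P := aux_int_of_sq inferInstance hf h2
  set m := ∫ ω, f ω ∂P with hm
  have e : (fun ω => (f ω - m) ^ 2) = fun ω => (f ω ^ 2 - 2 * m * f ω) + m ^ 2 := by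
    funext ω; ring
  have i1 : Integrable (fun ω => 2 * m * f ω) P := hfi.const_mul _
  have E1 : ∫ ω, (f ω ^ 2 - 2 * m * f ω) + m ^ 2 ∂P =
      (∫ ω, f ω ^ 2 - 2 * m * f ω ∂P) + ∫ ω, (m ^ 2 : ℝ) ∂P :=
    integral_add (h2.sub i1) (integrable_const _)
  have E2 : ∫ ω, f ω ^ 2 - 2 * m * f ω ∂P = (∫ ω, f ω ^ 2 ∂P) - ∫ ω, 2 * m * f ω ∂P :=
    integral_sub h2 i1
  have E3 : ∫ ω, 2 * m * f ω ∂P = 2 * m * m := integral_const_mul _ _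
  have E4 : ∫ ω, (m ^ 2 : ℝ) ∂P = m ^ 2 := by simp
  rw [e, E1, E2, E3, E4]
  ring

lemma aux_cov_expand {Ω : Type*} [MeasurableSpace Ω] {P : Measure Ω} [IsProbabilityMeasure P]
    {f g : Ω → ℝ} (hf : AEStronglyMeasurable f P) (hg : AEStronglyMeasurable g P)
    (h2f : Integrable (fun ω => f ω ^ 2) P) (h2g : Integrable (fun ω => g ω ^ 2) P) :
    ∫ ω, (f ω - ∫ ω', f ω' ∂P) * (g ω - ∫ ω', g ω' ∂P) ∂P =
      (∫ ω, f ω * g ω ∂P) - (∫ ω, f ω ∂P) * (∫ ω, g ω ∂P) := by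
  have hfi : Integrable f P := aux_int_of_sq inferInstance hf h2f
  have hgi : Integrable g P := aux_int_of_sq inferInstance hg h2g
  have hfgi : Integrable (fun ω => f ω * g ω) P := aux_int_mul hf hg h2f h2g
  set a := ∫ ω, f ω ∂P with ha
  set b := ∫ ω, g ω ∂P with hb
  have e : (fun ω => (f ω - a) * (g ω - b)) =
      fun ω => (f ω * g ω - (b * f ω + a * g ω)) + a * b := by
    funext ω; ring
  have i1 : Integrable (fun ω => b * f ω + a * g ω) P :=
    (hfi.const_mul _).add (hgi.const_mul _)
  have E1 : ∫ ω, (f ω * g ω - (b * f ω + a * g ω)) + a * b ∂P =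
      (∫ ω, f ω * g ω - (b * f ω + a * g ω) ∂P) + ∫ ω, (a * b : ℝ) ∂P :=
    integral_add (hfgi.sub i1) (integrable_const _)
  have E2 : ∫ ω, f ω * g ω - (b * f ω + a * g ω) ∂P =
      (∫ ω, f ω * g ω ∂P) - ∫ ω, b * f ω + a * g ω ∂P := integral_sub hfgi i1
  have E3 : ∫ ω, b * f ω + a * g ω ∂P = b * a + a * b := by
    rw [integral_add (hfi.const_mul _) (hgi.const_mul _), integral_const_mul, integral_const_mul]
  have E4 : ∫ ω, (a * b : ℝ) ∂P = a * b := by simp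
  rw [e, E1, E2, E3, E4]
  ring

lemma corrBound_base : CorrBound μ Prod.fst Prod.snd (maxCorr μ) := by
  intro F G hF hG hF2 hG2
  have hFm : Measurable fun p : ℝ × ℝ => F p.1 := hF.comp measurable_fst
  have hGm : Measurable fun p : ℝ × ℝ => G p.2 := hG.comp measurable_snd
  have hFi : Integrable (fun p : ℝ × ℝ => F p.1) μ :=
    aux_int_of_sq inferInstance hFm.aestronglyMeasurable hF2
  have hGi : Integrable (fun p : ℝ × ℝ => G p.2) μ :=
    aux_int_of_sq inferInstance hGm.aestronglyMeasurable hG2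
  have hFGi : Integrable (fun p : ℝ × ℝ => F p.1 * G p.2) μ :=
    aux_int_mul hFm.aestronglyMeasurable hGm.aestronglyMeasurable hF2 hG2
  set a := ∫ p : ℝ × ℝ, F p.1 ∂μ with ha
  set b := ∫ p : ℝ × ℝ, G p.2 ∂μ with hb
  set A := ∫ p : ℝ × ℝ, F p.1 ^ 2 ∂μ with hA
  set B := ∫ p : ℝ × ℝ, G p.2 ^ 2 ∂μ with hB
  have hvF : 0 ≤ A - a ^ 2 := by
    have := aux_sq_int_le inferInstance hFm.aestronglyMeasurable hF2
    simp only [← ha, ← hA] at this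
    linarith
  have hvG : 0 ≤ B - b ^ 2 := by
    have := aux_sq_int_le inferInstance hGm.aestronglyMeasurable hG2
    simp only [← hb, ← hB] at this
    linarith
  have hρ0 : 0 ≤ maxCorr μ := maxCorr_nonneg
  have hvarF := aux_var_expand hFm.aestronglyMeasurable hF2
  have hvarG := aux_var_expand hGm.aestronglyMeasurable hG2
  have iexpF : Integrable (fun p : ℝ × ℝ => (F p.1 - a) ^ 2) μ := by
    have e : (fun p : ℝ × ℝ => (F p.1 - a) ^ 2) =
        fun p => (F p.1 ^ 2 - 2 * a * F p.1) + a ^ 2 := by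
      funext p; ring
    rw [e]
    exact (hF2.sub (hFi.const_mul _)).add (integrable_const _)
  have iexpG : Integrable (fun p : ℝ × ℝ => (G p.2 - b) ^ 2) μ := by
    have e : (fun p : ℝ × ℝ => (G p.2 - b) ^ 2) =
        fun p => (G p.2 ^ 2 - 2 * b * G p.2) + b ^ 2 := by
      funext p; ring
    rw [e]
    exact (hG2.sub (hGi.const_mul _)).add (integrable_const _)
  rcases eq_or_lt_of_le hvF with hF0 | hFpos
  · -- F is a.e. constant
    have hz : ∫ p : ℝ × ℝ, (F p.1 - a) ^ 2 ∂μ = 0 := by rw [hvarF, ← ha, ← hA, ← hF0]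
    have hae : (fun p : ℝ × ℝ => (F p.1 - a) ^ 2) =ᵐ[μ] 0 :=
      (integral_eq_zero_iff_of_nonneg (fun p => sq_nonneg _) iexpF).mp hz
    have hFa : (fun p : ℝ × ℝ => F p.1 * G p.2) =ᵐ[μ] fun p => a * G p.2 := by
      filter_upwards [hae] with p hp
      have h0 : (F p.1 - a) ^ 2 = 0 := hp
      have : F p.1 = a := by nlinarith [sq_nonneg (F p.1 - a)]
      rw [this]
    have hL : ∫ p : ℝ × ℝ, F p.1 * G p.2 ∂μ = a * b := by
      rw [integral_congr_ae hFa, integral_const_mul]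
    rw [hL]
    have : 0 ≤ maxCorr μ * (Real.sqrt (A - a ^ 2) * Real.sqrt (B - b ^ 2)) := by positivity
    linarith
  · rcases eq_or_lt_of_le hvG with hG0 | hGpos
    · have hz : ∫ p : ℝ × ℝ, (G p.2 - b) ^ 2 ∂μ = 0 := by rw [hvarG, ← hb, ← hB, ← hG0]
      have hae : (fun p : ℝ × ℝ => (G p.2 - b) ^ 2) =ᵐ[μ] 0 :=
        (integral_eq_zero_iff_of_nonneg (fun p => sq_nonneg _) iexpG).mp hz
      have hGb : (fun p : ℝ × ℝ => F p.1 * G p.2) =ᵐ[μ] fun p => b * F p.1 := by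
        filter_upwards [hae] with p hp
        have h0 : (G p.2 - b) ^ 2 = 0 := hp
        have : G p.2 = b := by nlinarith [sq_nonneg (G p.2 - b)]
        rw [this]; ring
      have hL : ∫ p : ℝ × ℝ, F p.1 * G p.2 ∂μ = b * a := by
        rw [integral_congr_ae hGb, integral_const_mul]
      rw [hL]
      have : 0 ≤ maxCorr μ * (Real.sqrt (A - a ^ 2) * Real.sqrt (B - b ^ 2)) := by positivity
      nlinarith
    · -- both variances positive : normalize
      set cF := Real.sqrt (A - a ^ 2) with hcF
      set cG := Real.sqrt (B - b ^ 2) with hcG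
      have hcFpos : 0 < cF := Real.sqrt_pos.mpr hFpos
      have hcGpos : 0 < cG := Real.sqrt_pos.mpr hGpos
      have hcF2 : cF ^ 2 = A - a ^ 2 := Real.sq_sqrt hvF
      have hcG2 : cG ^ 2 = B - b ^ 2 := Real.sq_sqrt hvG
      set φ : ℝ → ℝ := fun x => (F x - a) * cF⁻¹ with hφ_def
      set ψ : ℝ → ℝ := fun y => (G y - b) * cG⁻¹ with hψ_def
      have hφm : Measurable φ := (hF.sub measurable_const).mul_const _
      have hψm : Measurable ψ := (hG.sub measurable_const).mul_const _
      have m1 : ∫ p : ℝ × ℝ, φ p.1 ∂μ = 0 := by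
        have : (fun p : ℝ × ℝ => φ p.1) = fun p : ℝ × ℝ => (F p.1 - a) * cF⁻¹ := rfl
        rw [this, integral_mul_const, integral_sub hFi (integrable_const _), integral_const,
          probReal_univ]
        simp
        exact Or.inl (sub_eq_zero.mpr rfl)
      have m1' : ∫ p : ℝ × ℝ, ψ p.2 ∂μ = 0 := by
        have : (fun p : ℝ × ℝ => ψ p.2) = fun p : ℝ × ℝ => (G p.2 - b) * cG⁻¹ := rfl
        rw [this, integral_mul_const, integral_sub hGi (integrable_const _), integral_const,
          probReal_univ]
        simp
        exact Or.inl (sub_eq_zero.mpr rfl)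
      have m2 : ∫ p : ℝ × ℝ, (φ p.1) ^ 2 ∂μ = 1 := by
        have e : (fun p : ℝ × ℝ => (φ p.1) ^ 2) =
            fun p : ℝ × ℝ => (F p.1 - a) ^ 2 * (cF⁻¹) ^ 2 := by
          funext p; rw [hφ_def]; ring
        rw [e, integral_mul_const, hvarF, ← ha, ← hA]
        rw [← hcF2]
        field_simp
      have m2' : ∫ p : ℝ × ℝ, (ψ p.2) ^ 2 ∂μ = 1 := by
        have e : (fun p : ℝ × ℝ => (ψ p.2) ^ 2) =
            fun p : ℝ × ℝ => (G p.2 - b) ^ 2 * (cG⁻¹) ^ 2 := by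
          funext p; rw [hψ_def]; ring
        rw [e, integral_mul_const, hvarG, ← hb, ← hB]
        rw [← hcG2]
        field_simp
      have hmem : (∫ p : ℝ × ℝ, φ p.1 * ψ p.2 ∂μ) ∈
          ({0} ∪ { r | ∃ φ ψ : ℝ → ℝ, Measurable φ ∧ Measurable ψ ∧
          (∫ p, φ p.1 ∂μ) = 0 ∧ (∫ p, (φ p.1) ^ 2 ∂μ) = 1 ∧
          (∫ p, ψ p.2 ∂μ) = 0 ∧ (∫ p, (ψ p.2) ^ 2 ∂μ) = 1 ∧
          r = ∫ p, φ p.1 * ψ p.2 ∂μ } : Set ℝ) :=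
        Or.inr ⟨φ, ψ, hφm, hψm, m1, m2, m1', m2', rfl⟩
      have hle : (∫ p : ℝ × ℝ, φ p.1 * ψ p.2 ∂μ) ≤ maxCorr μ :=
        le_csSup maxCorr_bddAbove hmem
      have hid : ∫ p : ℝ × ℝ, φ p.1 * ψ p.2 ∂μ =
          ((∫ p : ℝ × ℝ, F p.1 * G p.2 ∂μ) - a * b) * (cF⁻¹ * cG⁻¹) := by
        have e : (fun p : ℝ × ℝ => φ p.1 * ψ p.2) =
            fun p : ℝ × ℝ => ((F p.1 - a) * (G p.2 - b)) * (cF⁻¹ * cG⁻¹) := by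
          funext p; rw [hφ_def, hψ_def]; ring
        rw [e, integral_mul_const]
        congr 1
        have := aux_cov_expand (P := μ) hFm.aestronglyMeasurable hGm.aestronglyMeasurable hF2 hG2
        rw [← ha, ← hb] at this
        exact this
      rw [hid] at hle
      have hK : 0 < cF * cG := mul_pos hcFpos hcGpos
      have step : (∫ p : ℝ × ℝ, F p.1 * G p.2 ∂μ) - a * b ≤ maxCorr μ * (cF * cG) := by
        have e2 : ((∫ p : ℝ × ℝ, F p.1 * G p.2 ∂μ) - a * b) * (cF⁻¹ * cG⁻¹) =
            ((∫ p : ℝ × ℝ, F p.1 * G p.2 ∂μ) - a * b) / (cF * cG) := by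
          rw [div_eq_mul_inv, mul_inv]
        rw [e2, div_le_iff₀ hK] at hle
        exact hle
      linarith
end MaxCorr


section TV
variable {μ ν : Measure (ℝ × ℝ)} [IsProbabilityMeasure μ] [IsProbabilityMeasure ν]

lemma measure_toReal_le_one (E : Set (ℝ × ℝ)) : (μ E).toReal ≤ 1 := by
  have h1 : μ E ≤ 1 := prob_le_one
  have := ENNReal.toReal_mono (by simp) h1
  simpa using this

lemma abs_measure_sub_le_dTV {D : Set (ℝ × ℝ)} (hD : MeasurableSet D) :
    |(μ D).toReal - (ν D).toReal| ≤ dTV μ ν := by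
  have hb : BddAbove (Set.range fun D : { D : Set (ℝ × ℝ) // MeasurableSet D } =>
      |(μ D.1).toReal - (ν D.1).toReal|) := by
    refine ⟨2, ?_⟩
    rintro x ⟨E, rfl⟩
    have h1 : (μ E.1).toReal ≤ 1 := measure_toReal_le_one E.1
    have h2 : (ν E.1).toReal ≤ 1 := measure_toReal_le_one E.1
    have h3 : 0 ≤ (μ E.1).toReal := ENNReal.toReal_nonneg
    have h4 : 0 ≤ (ν E.1).toReal := ENNReal.toReal_nonneg
    rw [abs_le]
    constructor <;> linarith
  exact le_ciSup hb ⟨D, hD⟩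

lemma integral_sub_le_TV {h : ℝ × ℝ → ℝ} (hm : Measurable h) {C : ℝ} (hb : ∀ x, |h x| ≤ C) :
    |(∫ x, h x ∂μ) - ∫ x, h x ∂ν| ≤ 2 * C * dTV μ ν := by
  have hC0 : 0 ≤ C := le_trans (abs_nonneg _) (hb (0, 0))
  set τ := μ + ν with hτ
  have hac1 : μ ≪ τ := Measure.absolutelyContinuous_of_le (Measure.le_add_right le_rfl)
  have hac2 : ν ≪ τ := Measure.absolutelyContinuous_of_le (Measure.le_add_left le_rfl)
  set fμ : ℝ × ℝ → ℝ := fun x => (μ.rnDeriv τ x).toReal with hfμ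
  set gν : ℝ × ℝ → ℝ := fun x => (ν.rnDeriv τ x).toReal with hgν
  have measf : Measurable fμ := (Measure.measurable_rnDeriv μ τ).ennreal_toReal
  have measg : Measurable gν := (Measure.measurable_rnDeriv ν τ).ennreal_toReal
  have intf : Integrable fμ τ := Measure.integrable_toReal_rnDeriv
  have intg : Integrable gν τ := Measure.integrable_toReal_rnDeriv
  haveI : IsFiniteMeasure τ := by rw [hτ]; infer_instance
  haveI : μ.HaveLebesgueDecomposition τ := Measure.haveLebesgueDecomposition_of_finiteMeasure
  haveI : ν.HaveLebesgueDecomposition τ := Measure.haveLebesgueDecomposition_of_finiteMeasure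
  have E1 : ∫ x, fμ x * h x ∂τ = ∫ x, h x ∂μ := by
    simpa [smul_eq_mul] using integral_rnDeriv_smul (E := ℝ) hac1 (f := h)
  have E2 : ∫ x, gν x * h x ∂τ = ∫ x, h x ∂ν := by
    simpa [smul_eq_mul] using integral_rnDeriv_smul (E := ℝ) hac2 (f := h)
  have ih1 : Integrable (fun x => fμ x * h x) τ := by
    refine (intf.const_mul C).mono' ((measf.mul hm).aestronglyMeasurable) ?_
    filter_upwards with x
    rw [Real.norm_eq_abs, abs_mul, abs_of_nonneg ENNReal.toReal_nonneg, mul_comm C (fμ x)]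
    exact mul_le_mul_of_nonneg_left (hb x) ENNReal.toReal_nonneg
  have ih2 : Integrable (fun x => gν x * h x) τ := by
    refine (intg.const_mul C).mono' ((measg.mul hm).aestronglyMeasurable) ?_
    filter_upwards with x
    rw [Real.norm_eq_abs, abs_mul, abs_of_nonneg ENNReal.toReal_nonneg, mul_comm C (gν x)]
    exact mul_le_mul_of_nonneg_left (hb x) ENNReal.toReal_nonneg
  have Ediff : (∫ x, h x ∂μ) - ∫ x, h x ∂ν = ∫ x, (fμ x - gν x) * h x ∂τ := by
    rw [← E1, ← E2, ← integral_sub ih1 ih2]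
    congr 1
    funext x
    ring
  have intsub : Integrable (fun x => fμ x - gν x) τ := intf.sub intg
  have intabs : Integrable (fun x => |fμ x - gν x|) τ := intsub.abs
  have intabsh : Integrable (fun x => |fμ x - gν x| * |h x|) τ := by
    refine (intabs.mul_const C).mono'
      (((measf.sub measg).abs.mul hm.abs).aestronglyMeasurable) ?_
    filter_upwards with x
    rw [Real.norm_eq_abs, abs_of_nonneg (by positivity : (0:ℝ) ≤ |fμ x - gν x| * |h x|)]
    exact mul_le_mul_of_nonneg_left (hb x) (abs_nonneg _)
  have bound1 : |∫ x, (fμ x - gν x) * h x ∂τ| ≤ C * ∫ x, |fμ x - gν x| ∂τ := by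
    calc |∫ x, (fμ x - gν x) * h x ∂τ| ≤ ∫ x, |fμ x - gν x| * |h x| ∂τ := by
          simpa [Real.norm_eq_abs] using
            norm_integral_le_integral_norm (fun x => (fμ x - gν x) * h x) (μ := τ)
      _ ≤ ∫ x, |fμ x - gν x| * C ∂τ := by
          refine integral_mono intabsh (intabs.mul_const _) ?_
          intro x
          show |fμ x - gν x| * |h x| ≤ |fμ x - gν x| * C
          exact mul_le_mul_of_nonneg_left (hb x) (abs_nonneg _)
      _ = C * ∫ x, |fμ x - gν x| ∂τ := by rw [integral_mul_const]; ring
  have bound2 : ∫ x, |fμ x - gν x| ∂τ ≤ 2 * dTV μ ν := by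
    set Aset := {x : ℝ × ℝ | gν x ≤ fμ x} with hAset
    have hA : MeasurableSet Aset := measurableSet_le measg measf
    have split := integral_add_compl hA intabs
    have SA : ∫ x in Aset, |fμ x - gν x| ∂τ = (μ Aset).toReal - (ν Aset).toReal := by
      rw [setIntegral_congr_fun hA (fun x hx => abs_of_nonneg (sub_nonneg.mpr hx)),
        integral_sub intf.integrableOn intg.integrableOn,
        Measure.setIntegral_toReal_rnDeriv hac1, Measure.setIntegral_toReal_rnDeriv hac2]
      simp only [measureReal_def]
    have SAc : ∫ x in Asetᶜ, |fμ x - gν x| ∂τ = (ν Asetᶜ).toReal - (μ Asetᶜ).toReal := by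
      have : Set.EqOn (fun x => |fμ x - gν x|) (fun x => gν x - fμ x) Asetᶜ := by
        intro x hx
        have hlt : fμ x < gν x := not_le.mp hx
        show |fμ x - gν x| = gν x - fμ x
        rw [abs_of_neg (by linarith : fμ x - gν x < 0)]
        ring
      rw [setIntegral_congr_fun hA.compl this,
        integral_sub intg.integrableOn intf.integrableOn,
        Measure.setIntegral_toReal_rnDeriv hac1, Measure.setIntegral_toReal_rnDeriv hac2]
      simp only [measureReal_def]
    have b1 : (μ Aset).toReal - (ν Aset).toReal ≤ dTV μ ν :=
      le_trans (le_abs_self _) (abs_measure_sub_le_dTV hA)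
    have b2 : (ν Asetᶜ).toReal - (μ Asetᶜ).toReal ≤ dTV μ ν := by
      refine le_trans ?_ (abs_measure_sub_le_dTV hA.compl)
      rw [abs_sub_comm]
      exact le_abs_self _
    rw [← split, SA, SAc]
    linarith
  rw [Ediff]
  calc |∫ x, (fμ x - gν x) * h x ∂τ| ≤ C * ∫ x, |fμ x - gν x| ∂τ := bound1
    _ ≤ C * (2 * dTV μ ν) := mul_le_mul_of_nonneg_left bound2 hC0
    _ = 2 * C * dTV μ ν := by ring

end TV

section Limit
open Filter
variable {ν : Measure (ℝ × ℝ)} [IsProbabilityMeasure ν]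

lemma tendsto_integral_of_dTV {σ : ℕ → Measure (ℝ × ℝ)}
    (hp : ∀ n, IsProbabilityMeasure (σ n))
    (htv : Tendsto (fun n => dTV ν (σ n)) atTop (nhds 0))
    {h : ℝ × ℝ → ℝ} (hm : Measurable h) {C : ℝ} (hb : ∀ x, |h x| ≤ C) :
    Tendsto (fun n => ∫ x, h x ∂(σ n)) atTop (nhds (∫ x, h x ∂ν)) := by
  have key : ∀ n, ‖(∫ x, h x ∂(σ n)) - ∫ x, h x ∂ν‖ ≤ 2 * C * dTV ν (σ n) := by
    intro n
    haveI := hp n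
    rw [Real.norm_eq_abs, abs_sub_comm]
    exact integral_sub_le_TV hm hb
  have h0 : Tendsto (fun n => (∫ x, h x ∂(σ n)) - ∫ x, h x ∂ν) atTop (nhds 0) :=
    squeeze_zero_norm key (by simpa using htv.const_mul (2 * C))
  have := h0.add_const (∫ x, h x ∂ν)
  simpa using this

lemma bounded_bound_of_sim {σ : ℕ → Measure (ℝ × ℝ)}
    (hp : ∀ n, IsProbabilityMeasure (σ n)) {ρ : ℝ}
    (hcb : ∀ n, CorrBound (σ n) Prod.fst Prod.snd ρ)
    (htv : Tendsto (fun n => dTV ν (σ n)) atTop (nhds 0))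
    (F G : ℝ → ℝ) (CF CG : ℝ) (hF : Measurable F) (hG : Measurable G)
    (hbF : ∀ x, |F x| ≤ CF) (hbG : ∀ x, |G x| ≤ CG) :
    ∫ p, F p.1 * G p.2 ∂ν ≤ (∫ p, F p.1 ∂ν) * (∫ p, G p.2 ∂ν) +
      ρ * (Real.sqrt ((∫ p, F p.1 ^ 2 ∂ν) - (∫ p, F p.1 ∂ν) ^ 2) *
        Real.sqrt ((∫ p, G p.2 ^ 2 ∂ν) - (∫ p, G p.2 ∂ν) ^ 2)) := by
  have hCF0 : 0 ≤ CF := le_trans (abs_nonneg _) (hbF 0)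
  have hCG0 : 0 ≤ CG := le_trans (abs_nonneg _) (hbG 0)
  have hFm : Measurable fun p : ℝ × ℝ => F p.1 := hF.comp measurable_fst
  have hGm : Measurable fun p : ℝ × ℝ => G p.2 := hG.comp measurable_snd
  have bFG : ∀ p : ℝ × ℝ, |F p.1 * G p.2| ≤ CF * CG := by
    intro p
    rw [abs_mul]
    exact mul_le_mul (hbF _) (hbG _) (abs_nonneg _) hCF0
  have bF2 : ∀ p : ℝ × ℝ, |F p.1 ^ 2| ≤ CF ^ 2 := by
    intro p
    rw [abs_of_nonneg (sq_nonneg _), ← sq_abs]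
    exact pow_le_pow_left₀ (abs_nonneg _) (hbF _) 2
  have bG2 : ∀ p : ℝ × ℝ, |G p.2 ^ 2| ≤ CG ^ 2 := by
    intro p
    rw [abs_of_nonneg (sq_nonneg _), ← sq_abs]
    exact pow_le_pow_left₀ (abs_nonneg _) (hbG _) 2
  have t1 := tendsto_integral_of_dTV hp htv (hFm.mul hGm) bFG
  have t2 := tendsto_integral_of_dTV hp htv hFm (fun p => hbF p.1)
  have t3 := tendsto_integral_of_dTV hp htv hGm (fun p => hbG p.2)
  have t4 := tendsto_integral_of_dTV hp htv (hFm.pow_const 2) bF2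
  have t5 := tendsto_integral_of_dTV hp htv (hGm.pow_const 2) bG2
  have ineq : ∀ n, ∫ p, F p.1 * G p.2 ∂(σ n) ≤
      (∫ p, F p.1 ∂(σ n)) * (∫ p, G p.2 ∂(σ n)) +
      ρ * (Real.sqrt ((∫ p, F p.1 ^ 2 ∂(σ n)) - (∫ p, F p.1 ∂(σ n)) ^ 2) *
        Real.sqrt ((∫ p, G p.2 ^ 2 ∂(σ n)) - (∫ p, G p.2 ∂(σ n)) ^ 2)) := by
    intro n
    haveI := hp n
    have iF2 : Integrable (fun p : ℝ × ℝ => F p.1 ^ 2) (σ n) := by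
      refine (integrable_const (CF ^ 2)).mono'
        ((hFm.pow_const 2).aestronglyMeasurable) ?_
      filter_upwards with p
      rw [Real.norm_eq_abs]
      exact bF2 p
    have iG2 : Integrable (fun p : ℝ × ℝ => G p.2 ^ 2) (σ n) := by
      refine (integrable_const (CG ^ 2)).mono'
        ((hGm.pow_const 2).aestronglyMeasurable) ?_
      filter_upwards with p
      rw [Real.norm_eq_abs]
      exact bG2 p
    exact hcb n F G hF hG iF2 iG2
  refine le_of_tendsto_of_tendsto' t1 ?_ ineq
  exact (t2.mul t3).add ((((t4.sub (t2.pow 2)).sqrt).mul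
    ((t5.sub (t3.pow 2)).sqrt)).const_mul ρ)

lemma maxCorr_le_of_bounded {ρ : ℝ} (hρ0 : 0 ≤ ρ)
    (hb : ∀ (F G : ℝ → ℝ) (CF CG : ℝ), Measurable F → Measurable G →
      (∀ x, |F x| ≤ CF) → (∀ x, |G x| ≤ CG) →
      ∫ p, F p.1 * G p.2 ∂ν ≤ (∫ p, F p.1 ∂ν) * (∫ p, G p.2 ∂ν) +
        ρ * (Real.sqrt ((∫ p, F p.1 ^ 2 ∂ν) - (∫ p, F p.1 ∂ν) ^ 2) *
          Real.sqrt ((∫ p, G p.2 ^ 2 ∂ν) - (∫ p, G p.2 ∂ν) ^ 2))) :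
    maxCorr ν ≤ ρ := by
  rw [maxCorr]
  apply Real.sSup_le _ hρ0
  rintro r (hr | ⟨φ, ψ, hφ, hψ, hφ1, hφ2, hψ1, hψ2, rfl⟩)
  · rw [Set.mem_singleton_iff] at hr
    rw [hr]; exact hρ0
  · -- truncation
    set trunc : ℕ → ℝ → ℝ := fun M x => max (-(M : ℝ)) (min (M : ℝ) x) with htrunc
    have tr_le : ∀ (M : ℕ) (x : ℝ), |trunc M x| ≤ (M : ℝ) := by
      intro M x
      rw [abs_le]
      refine ⟨le_max_left _ _, max_le ?_ (min_le_left _ _)⟩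
      have : (0 : ℝ) ≤ (M : ℝ) := Nat.cast_nonneg M
      linarith
    have tr_abs : ∀ (M : ℕ) (x : ℝ), |trunc M x| ≤ |x| := by
      intro M x
      have hM : (0 : ℝ) ≤ (M : ℝ) := Nat.cast_nonneg M
      rw [abs_le]
      constructor
      · refine le_trans (le_min ?_ (neg_abs_le x)) (le_max_right _ _)
        have : (0 : ℝ) ≤ |x| := abs_nonneg x
        linarith
      · refine max_le ?_ (le_trans (min_le_right _ _) (le_abs_self x))
        have : (0 : ℝ) ≤ |x| := abs_nonneg x
        linarith
    have tr_tendsto : ∀ x : ℝ, Tendsto (fun M : ℕ => trunc M x) atTop (nhds x) := by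
      intro x
      have hev : (fun _ : ℕ => x) =ᶠ[atTop] fun M => trunc M x := by
        filter_upwards [Filter.eventually_ge_atTop ⌈|x|⌉₊] with M hM
        have hMx : |x| ≤ (M : ℝ) := le_trans (Nat.le_ceil _) (by exact_mod_cast hM)
        have h1 : x ≤ (M : ℝ) := le_trans (le_abs_self x) hMx
        have h2 : -(M : ℝ) ≤ x := by
          have := neg_abs_le x
          linarith
        rw [htrunc]
        simp only []
        rw [min_eq_right h1, max_eq_right h2]
      exact Tendsto.congr' hev tendsto_const_nhds
    have htrφ : ∀ M : ℕ, Measurable fun x => trunc M (φ x) :=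
      fun M => measurable_const.max (measurable_const.min hφ)
    have htrψ : ∀ M : ℕ, Measurable fun x => trunc M (ψ x) :=
      fun M => measurable_const.max (measurable_const.min hψ)
    have hφ2int : Integrable (fun p : ℝ × ℝ => φ p.1 ^ 2) ν := by
      by_contra hc
      rw [integral_undef hc] at hφ2
      exact one_ne_zero hφ2.symm
    have hψ2int : Integrable (fun p : ℝ × ℝ => ψ p.2 ^ 2) ν := by
      by_contra hc
      rw [integral_undef hc] at hψ2
      exact one_ne_zero hψ2.symm
    have hφm : Measurable fun p : ℝ × ℝ => φ p.1 := hφ.comp measurable_fst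
    have hψm : Measurable fun p : ℝ × ℝ => ψ p.2 := hψ.comp measurable_snd
    have hφi : Integrable (fun p : ℝ × ℝ => φ p.1) ν :=
      aux_int_of_sq inferInstance hφm.aestronglyMeasurable hφ2int
    have hψi : Integrable (fun p : ℝ × ℝ => ψ p.2) ν :=
      aux_int_of_sq inferInstance hψm.aestronglyMeasurable hψ2int
    have hφψint : Integrable (fun p : ℝ × ℝ => φ p.1 * ψ p.2) ν :=
      aux_int_mul hφm.aestronglyMeasurable hψm.aestronglyMeasurable hφ2int hψ2int
    -- dominated convergence
    have T1 : Tendsto (fun M : ℕ => ∫ p, trunc M (φ p.1) * trunc M (ψ p.2) ∂ν) atTop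
        (nhds (∫ p, φ p.1 * ψ p.2 ∂ν)) := by
      refine tendsto_integral_of_dominated_convergence (fun p => |φ p.1 * ψ p.2|)
        (fun M => (((htrφ M).comp measurable_fst).mul
          ((htrψ M).comp measurable_snd)).aestronglyMeasurable)
        hφψint.abs (fun M => ?_) ?_
      · filter_upwards with p
        rw [Real.norm_eq_abs, abs_mul, abs_mul]
        exact mul_le_mul (tr_abs M _) (tr_abs M _) (abs_nonneg _) (abs_nonneg _)
      · filter_upwards with p
        exact (tr_tendsto (φ p.1)).mul (tr_tendsto (ψ p.2))
    have T2 : Tendsto (fun M : ℕ => ∫ p, trunc M (φ p.1) ∂ν) atTop (nhds 0) := by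
      rw [← hφ1]
      refine tendsto_integral_of_dominated_convergence (fun p => |φ p.1|)
        (fun M => ((htrφ M).comp measurable_fst).aestronglyMeasurable)
        hφi.abs (fun M => ?_) ?_
      · filter_upwards with p
        rw [Real.norm_eq_abs]
        exact tr_abs M _
      · filter_upwards with p
        exact tr_tendsto (φ p.1)
    have T3 : Tendsto (fun M : ℕ => ∫ p, trunc M (ψ p.2) ∂ν) atTop (nhds 0) := by
      rw [← hψ1]
      refine tendsto_integral_of_dominated_convergence (fun p => |ψ p.2|)
        (fun M => ((htrψ M).comp measurable_snd).aestronglyMeasurable)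
        hψi.abs (fun M => ?_) ?_
      · filter_upwards with p
        rw [Real.norm_eq_abs]
        exact tr_abs M _
      · filter_upwards with p
        exact tr_tendsto (ψ p.2)
    have T4 : Tendsto (fun M : ℕ => ∫ p, trunc M (φ p.1) ^ 2 ∂ν) atTop (nhds 1) := by
      rw [← hφ2]
      refine tendsto_integral_of_dominated_convergence (fun p => φ p.1 ^ 2)
        (fun M => (((htrφ M).comp measurable_fst).pow_const 2).aestronglyMeasurable)
        hφ2int (fun M => ?_) ?_
      · filter_upwards with p
        rw [Real.norm_eq_abs, abs_of_nonneg (sq_nonneg _), ← sq_abs (trunc M (φ p.1)),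
          ← sq_abs (φ p.1)]
        exact pow_le_pow_left₀ (abs_nonneg _) (tr_abs M _) 2
      · filter_upwards with p
        exact (tr_tendsto (φ p.1)).pow 2
    have T5 : Tendsto (fun M : ℕ => ∫ p, trunc M (ψ p.2) ^ 2 ∂ν) atTop (nhds 1) := by
      rw [← hψ2]
      refine tendsto_integral_of_dominated_convergence (fun p => ψ p.2 ^ 2)
        (fun M => (((htrψ M).comp measurable_snd).pow_const 2).aestronglyMeasurable)
        hψ2int (fun M => ?_) ?_
      · filter_upwards with p
        rw [Real.norm_eq_abs, abs_of_nonneg (sq_nonneg _), ← sq_abs (trunc M (ψ p.2)),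
          ← sq_abs (ψ p.2)]
        exact pow_le_pow_left₀ (abs_nonneg _) (tr_abs M _) 2
      · filter_upwards with p
        exact (tr_tendsto (ψ p.2)).pow 2
    have ineq : ∀ M : ℕ, ∫ p, trunc M (φ p.1) * trunc M (ψ p.2) ∂ν ≤
        (∫ p, trunc M (φ p.1) ∂ν) * (∫ p, trunc M (ψ p.2) ∂ν) +
        ρ * (Real.sqrt ((∫ p, trunc M (φ p.1) ^ 2 ∂ν) - (∫ p, trunc M (φ p.1) ∂ν) ^ 2) *
          Real.sqrt ((∫ p, trunc M (ψ p.2) ^ 2 ∂ν) - (∫ p, trunc M (ψ p.2) ∂ν) ^ 2)) :=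
      fun M => hb (fun x => trunc M (φ x)) (fun x => trunc M (ψ x)) M M
        (htrφ M) (htrψ M) (tr_le M <| φ ·) (tr_le M <| ψ ·)
    have Rt : Tendsto (fun M : ℕ =>
        (∫ p, trunc M (φ p.1) ∂ν) * (∫ p, trunc M (ψ p.2) ∂ν) +
        ρ * (Real.sqrt ((∫ p, trunc M (φ p.1) ^ 2 ∂ν) - (∫ p, trunc M (φ p.1) ∂ν) ^ 2) *
          Real.sqrt ((∫ p, trunc M (ψ p.2) ^ 2 ∂ν) - (∫ p, trunc M (ψ p.2) ∂ν) ^ 2)))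
        atTop (nhds ((0 : ℝ) * 0 + ρ * (Real.sqrt (1 - 0 ^ 2) * Real.sqrt (1 - 0 ^ 2)))) :=
      (T2.mul T3).add ((((T4.sub (T2.pow 2)).sqrt).mul
        ((T5.sub (T3.pow 2)).sqrt)).const_mul ρ)
    have hval : (0 : ℝ) * 0 + ρ * (Real.sqrt (1 - 0 ^ 2) * Real.sqrt (1 - 0 ^ 2)) = ρ := by
      norm_num
    rw [hval] at Rt
    exact le_of_tendsto_of_tendsto' T1 Rt ineq
end Limit



theorem simulation_cannot_increase_maximal_correlation
    (μ ν : Measure (ℝ × ℝ)) (hμ : IsProbabilityMeasure μ) (hν : IsProbabilityMeasure ν)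
    (h : CanSimulate μ ν) :
    maxCorr ν ≤ maxCorr μ := by
  haveI := hμ
  haveI := hν
  obtain ⟨k, mm, f, g, hprop, htv⟩ := h
  have hρ0 : 0 ≤ maxCorr μ := maxCorr_nonneg
  have hbase : CorrBound μ Prod.fst Prod.snd (maxCorr μ) := corrBound_base
  -- measurability of the big simulation maps
  have hΦ : ∀ n, Measurable (fun ω : (Fin (k n) → ℝ × ℝ) × (Fin (mm n) × Fin (mm n)) =>
      ((f n) (fun i => (ω.1 i).1, ω.2.1), (g n) (fun i => (ω.1 i).2, ω.2.2))) := by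
    intro n
    obtain ⟨hk, hm, hfm, hgm⟩ := hprop n
    have hX1 : Measurable fun v : Fin (k n) → ℝ × ℝ => (fun i => (v i).1 : Fin (k n) → ℝ) :=
      measurable_pi_lambda _ fun i => (measurable_pi_apply i).fst
    have hY1 : Measurable fun v : Fin (k n) → ℝ × ℝ => (fun i => (v i).2 : Fin (k n) → ℝ) :=
      measurable_pi_lambda _ fun i => (measurable_pi_apply i).snd
    exact (hfm.comp ((hX1.comp measurable_fst).prodMk
        (measurable_fst.comp measurable_snd))).prodMk
      (hgm.comp ((hY1.comp measurable_fst).prodMk (measurable_snd.comp measurable_snd)))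
  have hprob : ∀ n, IsProbabilityMeasure (simLaw μ (k n) (mm n) (f n) (g n)) := by
    intro n
    obtain ⟨hk, hm, hfm, hgm⟩ := hprop n
    haveI : IsProbabilityMeasure (unif (mm n)) := unif_prob hm
    rw [simLaw]
    exact Measure.isProbabilityMeasure_map (hΦ n).aemeasurable
  have hsim : ∀ n, CorrBound (simLaw μ (k n) (mm n) (f n) (g n))
      Prod.fst Prod.snd (maxCorr μ) := by
    intro n
    obtain ⟨hk, hm, hfm, hgm⟩ := hprop n
    haveI : IsProbabilityMeasure (unif (mm n)) := unif_prob hm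
    have hX1 : Measurable fun v : Fin (k n) → ℝ × ℝ => (fun i => (v i).1 : Fin (k n) → ℝ) :=
      measurable_pi_lambda _ fun i => (measurable_pi_apply i).fst
    have hY1 : Measurable fun v : Fin (k n) → ℝ × ℝ => (fun i => (v i).2 : Fin (k n) → ℝ) :=
      measurable_pi_lambda _ fun i => (measurable_pi_apply i).snd
    have hpi := corrBound_pi hρ0 hbase (k n)
    have huu := corrBound_unif (m := mm n) hm
    have ht := CorrBound.prod hX1 hY1 measurable_fst measurable_snd hρ0 le_rfl hpi huu
    rw [max_eq_left hρ0] at ht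
    have hcomp := ht.comp hfm hgm
    exact CorrBound.map (hΦ n) measurable_fst measurable_snd hcomp
  exact maxCorr_le_of_bounded hρ0
    (fun F G CF CG hF hG hbF hbG =>
      bounded_bound_of_sim hprob hsim htv F G CF CG hF hG hbF hbG)
end

section
/- (Gradient as a surface integral via the divergence theorem.) Fix −1 < ρ < 1, ρ ≠ 0, d ≥ 2, and real numbers u_1,…,u_m. Let Ω_1,…,Ω_m be a measurable partition of ℝ^d, and assume that for each k there are a Borel set Σ_k ⊆ ℝ^d and a Borel map N_k : ℝ^d → ℝ^d with ‖N_k(y)‖ = 1 for y ∈ Σ_k, such that for every x ∈ ℝ^d and every constant vector field v ∈ ℝ^d the Gauss–Green identity holds: ∫_{Ω_k} div_y(v · e^{−‖y−ρx‖²/(2(1−ρ²))}) dy = ∫_{Σ_k} ⟨v, N_k(y)⟩ e^{−‖y−ρx‖²/(2(1−ρ²))} dH^{d−1}(y), with the surface integral absolutely convergent. Then for all x, v ∈ ℝ^d, ⟨v, ∇T_ρ(Σ_{k=1}^m u_k 1_{Ω_k})(x)⟩ = −(1−ρ²)^{−d/2} (2π)^{−d/2} ρ Σ_{k=1}^m u_k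 ∫_{Σ_k} ⟨v, N_k(y)⟩ e^{−‖y−ρx‖²/(2(1−ρ²))} dH^{d−1}(y). -/
open MeasureTheory

noncomputable def gauss (d : ℕ) : Measure (EuclideanSpace ℝ (Fin d)) :=
  volume.withDensity (fun x => ENNReal.ofReal ((2 * Real.pi) ^ (-(d : ℝ) / 2) * Real.exp (-‖x‖ ^ 2 / 2)))

noncomputable def OU (d : ℕ) (ρ : ℝ) (f : EuclideanSpace ℝ (Fin d) → ℝ)
    (x : EuclideanSpace ℝ (Fin d)) : ℝ :=
  ∫ y, f (ρ • x + Real.sqrt (1 - ρ ^ 2) • y) ∂(gauss d)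

noncomputable def Cmat (d m : ℕ) (ρ : ℝ)
    (f g : EuclideanSpace ℝ (Fin d) → (Fin m → ℝ)) : Matrix (Fin m) (Fin m) ℝ :=
  Matrix.of fun i j => ∫ x, f x i * OU d ρ (fun y => g y j) x ∂(gauss d)

def SimplexMap (d m : ℕ) (f : EuclideanSpace ℝ (Fin d) → (Fin m → ℝ)) : Prop :=
  Measurable f ∧ ∀ x, f x ∈ stdSimplex ℝ (Fin m)

noncomputable def Sset (ρ : ℝ) (m d : ℕ) : Set (Matrix (Fin m) (Fin m) ℝ) :=
  { M | ∃ f g, SimplexMap d m f ∧ SimplexMap d m g ∧ M = Cmat d m ρ f g }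

def IsPartition (d m : ℕ) (Ω : Fin m → Set (EuclideanSpace ℝ (Fin d))) : Prop :=
  (∀ i, MeasurableSet (Ω i)) ∧ Pairwise (Function.onFun Disjoint Ω) ∧ (⋃ i, Ω i) = Set.univ

/-- The divergence `div X = Σ_i ∂X_i/∂x_i` of a vector field on `ℝ^d`. -/
noncomputable def diverg (d : ℕ) (X : EuclideanSpace ℝ (Fin d) → EuclideanSpace ℝ (Fin d))
    (x : EuclideanSpace ℝ (Fin d)) : ℝ :=
  ∑ i, fderiv ℝ X x (EuclideanSpace.single i 1) i

open scoped MeasureTheory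


section Aux
open MeasureTheory Real
open scoped RealInnerProductSpace

variable {E : Type*} [NormedAddCommGroup E] [InnerProductSpace ℝ E]

lemma gker_hasFDerivAt (σ2 : ℝ) (hσ : σ2 ≠ 0) (w : E) :
    HasFDerivAt (fun w : E => Real.exp (-‖w‖ ^ 2 / (2 * σ2)))
      ((-(1/σ2) * Real.exp (-‖w‖ ^ 2 / (2 * σ2))) • innerSL ℝ w) w := by
  have h : HasFDerivAt (fun w : E => Real.exp ((-(2*σ2)⁻¹) * ⟪w, w⟫))
      (Real.exp ((-(2*σ2)⁻¹) * ⟪w, w⟫) • ((-(2*σ2)⁻¹) •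
        ((fderivInnerCLM ℝ (w, w)).comp ((ContinuousLinearMap.id ℝ E).prod (ContinuousLinearMap.id ℝ E))))) w :=
    (((hasFDerivAt_id w).inner ℝ (hasFDerivAt_id w)).const_mul (-(2*σ2)⁻¹)).exp
  have hfun : (fun w : E => Real.exp ((-(2*σ2)⁻¹) * ⟪w, w⟫)) =
      (fun w : E => Real.exp (-‖w‖ ^ 2 / (2 * σ2))) := by
    funext y
    rw [real_inner_self_eq_norm_sq]
    ring_nf
  rw [hfun] at h
  refine h.congr_fderiv ?_
  ext v
  simp only [ContinuousLinearMap.smul_apply, ContinuousLinearMap.coe_comp', Function.comp_apply,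
    ContinuousLinearMap.prod_apply, ContinuousLinearMap.coe_id', id_eq, fderivInnerCLM_apply,
    innerSL_apply_apply, smul_eq_mul, real_inner_self_eq_norm_sq]
  rw [show -(2*σ2)⁻¹ * ‖w‖^2 = -‖w‖^2/(2*σ2) by ring, real_inner_comm v w]
  field_simp
  ring

lemma xder (σ2 : ℝ) (hσ : σ2 ≠ 0) (ρ : ℝ) (z x : E) :
    HasFDerivAt (fun x : E => Real.exp (-‖z - ρ • x‖ ^ 2 / (2 * σ2)))
      (((ρ/σ2) * Real.exp (-‖z - ρ • x‖ ^ 2 / (2 * σ2))) • innerSL ℝ (z - ρ • x)) x := by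
  have hf : HasFDerivAt (fun x : E => z - ρ • x)
      ((0 : E →L[ℝ] E) - ρ • ContinuousLinearMap.id ℝ E) x :=
    (hasFDerivAt_const z x).sub ((hasFDerivAt_id x).const_smul ρ)
  have h := (gker_hasFDerivAt σ2 hσ (z - ρ • x)).comp x hf
  refine h.congr_fderiv ?_
  ext v
  simp only [ContinuousLinearMap.smul_apply, ContinuousLinearMap.coe_comp', Function.comp_apply,
    ContinuousLinearMap.coe_sub', ContinuousLinearMap.zero_apply, Pi.sub_apply,
    ContinuousLinearMap.coe_smul', Pi.smul_apply, ContinuousLinearMap.coe_id', id_eq,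
    innerSL_apply_apply, smul_eq_mul, zero_sub, inner_neg_right, real_inner_smul_right,
    ContinuousLinearMap.neg_apply]
  ring

lemma yder (σ2 : ℝ) (hσ : σ2 ≠ 0) (ρ : ℝ) (x y : E) :
    HasFDerivAt (fun y : E => Real.exp (-‖y - ρ • x‖ ^ 2 / (2 * σ2)))
      ((-(1/σ2) * Real.exp (-‖y - ρ • x‖ ^ 2 / (2 * σ2))) • innerSL ℝ (y - ρ • x)) y := by
  have hf : HasFDerivAt (fun y : E => y - ρ • x)
      (ContinuousLinearMap.id ℝ E - (0 : E →L[ℝ] E)) y :=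
    (hasFDerivAt_id y).sub (hasFDerivAt_const (ρ • x) y)
  have h := (gker_hasFDerivAt σ2 hσ (y - ρ • x)).comp y hf
  refine h.congr_fderiv ?_
  ext v
  simp

lemma gauss_int (d : ℕ) {b : ℝ} (hb : 0 < b) :
    Integrable (fun z : EuclideanSpace ℝ (Fin d) => Real.exp (-b * ‖z‖ ^ 2)) := by
  have h := (GaussianFourier.integrable_cexp_neg_mul_sq_norm_add (V := EuclideanSpace ℝ (Fin d))
    (b := (b : ℂ)) (by simpa using hb) 0 0).norm
  refine h.congr (Filter.Eventually.of_forall fun z => ?_)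
  simp [Complex.norm_exp]
  norm_cast
  exact Or.inl rfl

lemma bound_aux {σ2 t R n : ℝ} (hσ : 0 < σ2) (ht : 0 ≤ t) (hR : 0 ≤ R) (hn : 0 ≤ n)
    (h : n ≤ t + R) :
    Real.exp (-t ^ 2 / (2 * σ2)) * t ≤
      (1 + 4 * σ2) * (Real.exp (R ^ 2 / (4 * σ2)) * Real.exp (-(8 * σ2)⁻¹ * n ^ 2)) := by
  have hexp := Real.add_one_le_exp (t ^ 2 / (4 * σ2))
  have h1 : t ≤ (1 + 4 * σ2) * Real.exp (t ^ 2 / (4 * σ2)) := by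
    have h4 : (0:ℝ) < 4 * σ2 := by positivity
    have ht2 : t ^ 2 / (4 * σ2) * (4 * σ2) = t ^ 2 := by field_simp
    nlinarith [sq_nonneg (t - 1), mul_le_mul_of_nonneg_right hexp h4.le]
  have h2 : Real.exp (-t ^ 2 / (2 * σ2)) * ((1 + 4 * σ2) * Real.exp (t ^ 2 / (4 * σ2))) =
      (1 + 4 * σ2) * Real.exp (-t ^ 2 / (4 * σ2)) := by
    rw [mul_comm (Real.exp _) _, mul_assoc, ← Real.exp_add]
    congr 2
    field_simp; ring
  have h3 : Real.exp (-t ^ 2 / (4 * σ2)) ≤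
      Real.exp (R ^ 2 / (4 * σ2)) * Real.exp (-(8 * σ2)⁻¹ * n ^ 2) := by
    rw [← Real.exp_add]
    apply Real.exp_le_exp.2
    have hnn : n ^ 2 ≤ 2 * t ^ 2 + 2 * R ^ 2 := by nlinarith [sq_nonneg (t - R), mul_le_mul h h hn (by linarith : (0:ℝ) ≤ t + R)]
    have h9 : (0:ℝ) ≤ (2 * R ^ 2 + 2 * t ^ 2 - n ^ 2) / (8 * σ2) :=
      div_nonneg (by nlinarith [sq_nonneg (t - R), mul_le_mul h h hn (by linarith : (0:ℝ) ≤ t + R)]) (by positivity)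
    have he : R ^ 2 / (4 * σ2) + -(8 * σ2)⁻¹ * n ^ 2 - (-t ^ 2 / (4 * σ2)) =
        (2 * R ^ 2 + 2 * t ^ 2 - n ^ 2) / (8 * σ2) := by
      field_simp; ring
    linarith [he ▸ h9]
  calc Real.exp (-t ^ 2 / (2 * σ2)) * t
      ≤ Real.exp (-t ^ 2 / (2 * σ2)) * ((1 + 4 * σ2) * Real.exp (t ^ 2 / (4 * σ2))) :=
        mul_le_mul_of_nonneg_left h1 (Real.exp_nonneg _)
    _ = (1 + 4 * σ2) * Real.exp (-t ^ 2 / (4 * σ2)) := h2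
    _ ≤ (1 + 4 * σ2) * (Real.exp (R ^ 2 / (4 * σ2)) * Real.exp (-(8 * σ2)⁻¹ * n ^ 2)) := by
        apply mul_le_mul_of_nonneg_left h3 (by positivity)

lemma gauss_integral_eq (d : ℕ) (g : EuclideanSpace ℝ (Fin d) → ℝ) :
    ∫ y, g y ∂(gauss d) =
      ∫ y, ((2 * Real.pi) ^ (-(d : ℝ) / 2) * Real.exp (-‖y‖ ^ 2 / 2)) * g y := by
  have hd : Measurable fun y : EuclideanSpace ℝ (Fin d) =>
      ((2 * Real.pi) ^ (-(d : ℝ) / 2) * Real.exp (-‖y‖ ^ 2 / 2)).toNNReal := by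
    apply Measurable.real_toNNReal
    exact (continuous_const.mul ((continuous_norm.pow 2).neg.div_const 2).rexp).measurable
  rw [gauss]
  erw [integral_withDensity_eq_integral_smul hd]
  congr 1
  funext y
  rw [NNReal.smul_def, smul_eq_mul, Real.coe_toNNReal]
  positivity

lemma OU_eq (d : ℕ) (ρ : ℝ) (hρ₁ : -1 < ρ) (hρ₂ : ρ < 1)
    (f : EuclideanSpace ℝ (Fin d) → ℝ) (x : EuclideanSpace ℝ (Fin d)) :
    OU d ρ f x = ((1 - ρ ^ 2) ^ (-(d : ℝ) / 2) * (2 * Real.pi) ^ (-(d : ℝ) / 2)) *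
      ∫ z, Real.exp (-‖z - ρ • x‖ ^ 2 / (2 * (1 - ρ ^ 2))) * f z := by
  have hσ : (0:ℝ) < 1 - ρ ^ 2 := by nlinarith
  set g : EuclideanSpace ℝ (Fin d) → ℝ := fun z =>
    (2 * Real.pi) ^ (-(d : ℝ) / 2) * (Real.exp (-‖z - ρ • x‖ ^ 2 / (2 * (1 - ρ ^ 2))) * f z)
    with hg
  have step1 : OU d ρ f x = ∫ y, g (ρ • x + Real.sqrt (1 - ρ ^ 2) • y) := by
    rw [OU, gauss_integral_eq]
    congr 1; funext y
    simp only [hg]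
    have h1 : ‖ρ • x + Real.sqrt (1 - ρ ^ 2) • y - ρ • x‖ ^ 2 = (1 - ρ ^ 2) * ‖y‖ ^ 2 := by
      rw [add_sub_cancel_left, norm_smul, mul_pow, Real.norm_eq_abs, sq_abs,
        Real.sq_sqrt hσ.le]
    rw [h1]
    have h2 : -((1 - ρ ^ 2) * ‖y‖ ^ 2) / (2 * (1 - ρ ^ 2)) = -‖y‖ ^ 2 / 2 := by
      field_simp
    rw [h2]; ring
  have step2 : (∫ y, g (ρ • x + Real.sqrt (1 - ρ ^ 2) • y)) =
      (Real.sqrt (1 - ρ ^ 2) ^ d)⁻¹ * ∫ z, g z := by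
    have h1 : (∫ y, g (ρ • x + Real.sqrt (1 - ρ ^ 2) • y)) =
        ∫ y, (fun w => g (ρ • x + w)) (Real.sqrt (1 - ρ ^ 2) • y) := rfl
    rw [h1, MeasureTheory.Measure.integral_comp_smul volume (fun w => g (ρ • x + w))
      (Real.sqrt (1 - ρ ^ 2)),
      integral_add_left_eq_self (fun w => g w) (ρ • x), finrank_euclideanSpace_fin,
      abs_of_nonneg (by positivity), smul_eq_mul]
  have step3 : ((Real.sqrt (1 - ρ ^ 2)) ^ d : ℝ)⁻¹ = (1 - ρ ^ 2) ^ (-(d : ℝ) / 2) := by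
    rw [← Real.rpow_natCast (Real.sqrt (1 - ρ ^ 2)) d, Real.sqrt_eq_rpow,
      ← Real.rpow_mul hσ.le, ← Real.rpow_neg hσ.le]
    congr 1; ring
  rw [step1, step2, step3]
  simp only [hg]
  rw [MeasureTheory.integral_const_mul]
  ring

lemma ker_int (d : ℕ) {σ2 : ℝ} (hσ : 0 < σ2) (a : EuclideanSpace ℝ (Fin d)) :
    Integrable (fun z : EuclideanSpace ℝ (Fin d) => Real.exp (-‖z - a‖ ^ 2 / (2 * σ2))) := by
  have h := (gauss_int d (b := (2*σ2)⁻¹) (by positivity)).comp_sub_right a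
  refine h.congr (Filter.Eventually.of_forall fun z => ?_)
  show Real.exp (-(2*σ2)⁻¹ * ‖z - a‖ ^ 2) = Real.exp (-‖z - a‖ ^ 2 / (2 * σ2))
  congr 1
  ring

lemma cont_ker {d : ℕ} (σ2 ρ : ℝ) (x : EuclideanSpace ℝ (Fin d)) :
    Continuous fun z : EuclideanSpace ℝ (Fin d) =>
      Real.exp (-‖z - ρ • x‖ ^ 2 / (2 * σ2)) :=
  (((((continuous_id.sub continuous_const).norm.pow 2).neg).div_const _)).rexp

lemma Gderiv (d : ℕ) {σ2 ρ : ℝ} (hσ : 0 < σ2) (Ωk : Set (EuclideanSpace ℝ (Fin d)))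
    (x₀ : EuclideanSpace ℝ (Fin d)) :
    HasFDerivAt (fun x => ∫ z in Ωk, Real.exp (-‖z - ρ • x‖ ^ 2 / (2 * σ2)))
      (∫ z in Ωk, ((ρ/σ2) * Real.exp (-‖z - ρ • x₀‖ ^ 2 / (2 * σ2))) • innerSL ℝ (z - ρ • x₀)) x₀
    ∧ Integrable (fun z => ((ρ/σ2) * Real.exp (-‖z - ρ • x₀‖ ^ 2 / (2 * σ2))) • innerSL ℝ (z - ρ • x₀))
        (volume.restrict Ωk) := by
  set R : ℝ := |ρ| * (‖x₀‖ + 1) with hR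
  have hR0 : 0 ≤ R := by positivity
  set bound : EuclideanSpace ℝ (Fin d) → ℝ := fun z =>
    |ρ/σ2| * ((1 + 4 * σ2) * (Real.exp (R ^ 2 / (4 * σ2)) * Real.exp (-(8 * σ2)⁻¹ * ‖z‖ ^ 2)))
    with hbnd
  set F' : EuclideanSpace ℝ (Fin d) → EuclideanSpace ℝ (Fin d) → (EuclideanSpace ℝ (Fin d) →L[ℝ] ℝ) := fun x z =>
    ((ρ/σ2) * Real.exp (-‖z - ρ • x‖ ^ 2 / (2 * σ2))) • innerSL ℝ (z - ρ • x) with hF'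
  have hnorm : ∀ x z : EuclideanSpace ℝ (Fin d), ‖F' x z‖ =
      |ρ/σ2| * (Real.exp (-‖z - ρ • x‖ ^ 2 / (2 * σ2)) * ‖z - ρ • x‖) := by
    intro x z
    simp only [hF']
    rw [norm_smul (ρ / σ2 * Real.exp (-‖z - ρ • x‖ ^ 2 / (2 * σ2))) (innerSL ℝ (z - ρ • x)),
      innerSL_apply_norm, Real.norm_eq_abs, abs_mul, Real.abs_exp]
    ring
  have h_bound : ∀ z : EuclideanSpace ℝ (Fin d), ∀ x ∈ Metric.ball x₀ 1, ‖F' x z‖ ≤ bound z := by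
    intro z x hx
    have hxn : ‖x‖ ≤ ‖x₀‖ + 1 := by
      have := mem_ball_iff_norm.1 hx
      have h2 : ‖x‖ - ‖x₀‖ ≤ ‖x - x₀‖ := norm_sub_norm_le x x₀
      linarith
    have htri : ‖z‖ ≤ ‖z - ρ • x‖ + R := by
      have h1 : ‖z‖ ≤ ‖z - ρ • x‖ + ‖ρ • x‖ := by
        simpa using norm_add_le (z - ρ • x) (ρ • x)
      have h2 : ‖ρ • x‖ ≤ R := by
        rw [norm_smul, Real.norm_eq_abs, hR]
        exact mul_le_mul_of_nonneg_left hxn (abs_nonneg ρ)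
      linarith
    rw [hnorm, hbnd]
    exact mul_le_mul_of_nonneg_left
      (bound_aux hσ (norm_nonneg _) hR0 (norm_nonneg _) htri) (abs_nonneg _)
  have hbint : Integrable bound (volume.restrict Ωk) := by
    have h0 : Integrable (fun z : EuclideanSpace ℝ (Fin d) =>
        Real.exp (-(8 * σ2)⁻¹ * ‖z‖ ^ 2)) volume := gauss_int d (by positivity)
    exact (((h0.const_mul _).const_mul _).const_mul _).restrict
  have hF'cont : Continuous (F' x₀) := by
    refine Continuous.smul ((continuous_const.mul (cont_ker σ2 ρ x₀))) ?_
    exact (innerSL ℝ).continuous.comp (continuous_id.sub continuous_const)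
  have hF'int : Integrable (F' x₀) (volume.restrict Ωk) := by
    refine Integrable.mono' hbint hF'cont.aestronglyMeasurable.restrict
      (Filter.Eventually.of_forall fun z => ?_)
    exact h_bound z x₀ (Metric.mem_ball_self one_pos)
  refine ⟨?_, hF'int⟩
  apply hasFDerivAt_integral_of_dominated_of_fderiv_le (F' := F') (bound := bound)
    (Metric.ball_mem_nhds x₀ one_pos)
  · exact Filter.Eventually.of_forall fun x => (cont_ker σ2 ρ x).aestronglyMeasurable.restrict
  · exact ((ker_int d hσ (ρ • x₀)).restrict)
  · exact hF'cont.aestronglyMeasurable.restrict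
  · exact Filter.Eventually.of_forall fun z => h_bound z
  · exact hbint
  · exact Filter.Eventually.of_forall fun z x _ => xder σ2 hσ.ne' ρ z x

lemma diverg_eq (d : ℕ) {σ2 ρ : ℝ} (hσ : σ2 ≠ 0) (x v y : EuclideanSpace ℝ (Fin d)) :
    diverg d (fun y => Real.exp (-‖y - ρ • x‖ ^ 2 / (2 * σ2)) • v) y =
      (-(1/σ2) * Real.exp (-‖y - ρ • x‖ ^ 2 / (2 * σ2))) * ⟪y - ρ • x, v⟫ := by
  have hX := (yder σ2 hσ ρ x y).smul_const v
  rw [diverg]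
  rw [hX.fderiv]
  simp only [ContinuousLinearMap.smulRight_apply, ContinuousLinearMap.smul_apply,
    innerSL_apply_apply, smul_eq_mul, PiLp.smul_apply, EuclideanSpace.inner_single_right,
    RCLike.conj_to_real, mul_one]
  rw [PiLp.inner_apply]
  simp only [RCLike.inner_apply, conj_trivial]
  rw [Finset.mul_sum]
  exact Finset.sum_congr rfl fun i _ => by ring

end Aux

open Real
open scoped RealInnerProductSpace

theorem gradient_as_surface_integral
    (ρ : ℝ) (hρ₁ : -1 < ρ) (hρ₂ : ρ < 1) (hρ₀ : ρ ≠ 0) (d : ℕ) (hd : 2 ≤ d)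
    (m : ℕ) (u : Fin m → ℝ)
    (Ω : Fin m → Set (EuclideanSpace ℝ (Fin d))) (hΩ : IsPartition d m Ω)
    (Sig : Fin m → Set (EuclideanSpace ℝ (Fin d))) (hSig : ∀ k, MeasurableSet (Sig k))
    (N : Fin m → EuclideanSpace ℝ (Fin d) → EuclideanSpace ℝ (Fin d))
    (hNmeas : ∀ k, Measurable (N k)) (hNunit : ∀ k, ∀ y ∈ Sig k, ‖N k y‖ = 1)
    (hGG : ∀ (k : Fin m) (x v : EuclideanSpace ℝ (Fin d)),
      MeasureTheory.Integrable
        (fun y => (inner ℝ v (N k y) : ℝ) * Real.exp (-‖y - ρ • x‖ ^ 2 / (2 * (1 - ρ ^ 2))))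
        ((μH[(d : ℝ) - 1]).restrict (Sig k)) ∧
      (∫ y in Ω k,
          diverg d (fun y => Real.exp (-‖y - ρ • x‖ ^ 2 / (2 * (1 - ρ ^ 2))) • v) y)
        = ∫ y in Sig k, (inner ℝ v (N k y) : ℝ) *
            Real.exp (-‖y - ρ • x‖ ^ 2 / (2 * (1 - ρ ^ 2))) ∂(μH[(d : ℝ) - 1])) :
    ∀ x v : EuclideanSpace ℝ (Fin d),
      fderiv ℝ (OU d ρ (fun y => ∑ k, u k * Set.indicator (Ω k) (fun _ => (1 : ℝ)) y)) x v =
        -((1 - ρ ^ 2) ^ (-(d : ℝ) / 2) * (2 * Real.pi) ^ (-(d : ℝ) / 2)) * ρ *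
          ∑ k, u k * ∫ y in Sig k, (inner ℝ v (N k y) : ℝ) *
            Real.exp (-‖y - ρ • x‖ ^ 2 / (2 * (1 - ρ ^ 2))) ∂(μH[(d : ℝ) - 1]) := by
  intro x v
  have hσ : (0:ℝ) < 1 - ρ ^ 2 := by nlinarith
  have hσne : (1 - ρ ^ 2) ≠ 0 := hσ.ne'
  have hOU : OU d ρ (fun y => ∑ k, u k * Set.indicator (Ω k) (fun _ => (1 : ℝ)) y) =
      fun x' => ((1 - ρ ^ 2) ^ (-(d : ℝ) / 2) * (2 * Real.pi) ^ (-(d : ℝ) / 2)) *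
        ∑ k, u k * ∫ z in Ω k, Real.exp (-‖z - ρ • x'‖ ^ 2 / (2 * (1 - ρ ^ 2))) := by
    funext x'
    rw [OU_eq d ρ hρ₁ hρ₂ _ x']
    congr 1
    have hpt : ∀ z : EuclideanSpace ℝ (Fin d),
        Real.exp (-‖z - ρ • x'‖ ^ 2 / (2 * (1 - ρ ^ 2))) *
          ((fun y => ∑ k, u k * Set.indicator (Ω k) (fun _ => (1:ℝ)) y) z) =
        ∑ k, u k * Set.indicator (Ω k)
          (fun z => Real.exp (-‖z - ρ • x'‖ ^ 2 / (2 * (1 - ρ ^ 2)))) z := by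
      intro z
      simp only [Finset.mul_sum]
      refine Finset.sum_congr rfl fun k _ => ?_
      by_cases hz : z ∈ Ω k
      · simp only [Set.indicator_of_mem hz]; ring
      · simp only [Set.indicator_of_notMem hz]; ring
    rw [integral_congr_ae (Filter.Eventually.of_forall hpt)]
    rw [integral_finset_sum _ (fun k _ =>
      ((ker_int d hσ (ρ • x')).indicator (hΩ.1 k)).const_mul (u k))]
    refine Finset.sum_congr rfl fun k _ => ?_
    rw [MeasureTheory.integral_const_mul, integral_indicator (hΩ.1 k)]
  have hB : HasFDerivAt
      (fun x' => ((1 - ρ ^ 2) ^ (-(d : ℝ) / 2) * (2 * Real.pi) ^ (-(d : ℝ) / 2)) *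
        ∑ k, u k * ∫ z in Ω k, Real.exp (-‖z - ρ • x'‖ ^ 2 / (2 * (1 - ρ ^ 2))))
      (((1 - ρ ^ 2) ^ (-(d : ℝ) / 2) * (2 * Real.pi) ^ (-(d : ℝ) / 2)) •
        ∑ k : Fin m, u k • ∫ z in Ω k,
          ((ρ / (1 - ρ ^ 2)) * Real.exp (-‖z - ρ • x‖ ^ 2 / (2 * (1 - ρ ^ 2)))) •
            innerSL ℝ (z - ρ • x)) x := by
    refine HasFDerivAt.const_mul ?_ _
    refine HasFDerivAt.fun_sum fun k _ => ?_
    exact ((Gderiv d hσ (Ω k) x).1).const_mul (u k)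
  rw [hOU, hB.fderiv]
  have happ : ∀ k : Fin m,
      (∫ z in Ω k, ((ρ / (1 - ρ ^ 2)) * Real.exp (-‖z - ρ • x‖ ^ 2 / (2 * (1 - ρ ^ 2)))) •
        innerSL ℝ (z - ρ • x)) v =
      -ρ * ∫ y in Sig k, (inner ℝ v (N k y) : ℝ) *
          Real.exp (-‖y - ρ • x‖ ^ 2 / (2 * (1 - ρ ^ 2))) ∂(μH[(d : ℝ) - 1]) := by
    intro k
    rw [ContinuousLinearMap.integral_apply (Gderiv d hσ (Ω k) x).2 v]
    have h1 : ∀ z : EuclideanSpace ℝ (Fin d),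
        ((((ρ / (1 - ρ ^ 2)) * Real.exp (-‖z - ρ • x‖ ^ 2 / (2 * (1 - ρ ^ 2)))) •
          innerSL ℝ (z - ρ • x)) v) =
        -ρ * diverg d
          (fun y => Real.exp (-‖y - ρ • x‖ ^ 2 / (2 * (1 - ρ ^ 2))) • v) z := by
      intro z
      rw [diverg_eq d hσne x v z]
      simp only [ContinuousLinearMap.smul_apply, innerSL_apply_apply, smul_eq_mul]
      ring
    rw [integral_congr_ae (Filter.Eventually.of_forall h1)]
    rw [MeasureTheory.integral_const_mul, (hGG k x v).2]
  simp only [ContinuousLinearMap.smul_apply, ContinuousLinearMap.sum_apply, smul_eq_mul]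
  simp only [happ]
  rw [show (∑ k : Fin m, u k * (-ρ * ∫ y in Sig k, (inner ℝ v (N k y) : ℝ) *
      Real.exp (-‖y - ρ • x‖ ^ 2 / (2 * (1 - ρ ^ 2))) ∂(μH[(d : ℝ) - 1]))) =
      -ρ * ∑ k : Fin m, u k * ∫ y in Sig k, (inner ℝ v (N k y) : ℝ) *
      Real.exp (-‖y - ρ • x‖ ^ 2 / (2 * (1 - ρ ^ 2))) ∂(μH[(d : ℝ) - 1]) from by
    rw [Finset.mul_sum]; exact Finset.sum_congr rfl fun k _ => by ring]
  ring
end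

section
/- (Key Lemma: translations as almost eigenfunctions.) Fix −1 < ρ < 1, ρ ≠ 0, d ≥ 2, and real numbers u_1,…,u_m. Let Ω_1,…,Ω_m be a measurable partition of ℝ^d, and assume that for each k there are a Borel set Σ_k ⊆ ℝ^d and a Borel map N_k : ℝ^d → ℝ^d with ‖N_k(y)‖ = 1 for y ∈ Σ_k, such that for every x ∈ ℝ^d and every constant vector field v ∈ ℝ^d the Gauss–Green identity holds: ∫_{Ω_k} div_y(v · e^{−‖y−ρx‖²/(2(1−ρ²))}) dy = ∫_{Σ_k} ⟨v, N_k(y)⟩ e^{−‖y−ρx‖²/(2(1−ρ²))} dH^{d−1}(y), with the surface integral absolutely convergent. Define S(⟨v,N⟩)(x) := (1−ρ²)^{−d/2} (2π)^{−d/2} Σ_{k=1}^m u_k ∫_{Σ_k} ⟨v, N_k(y)⟩ e^{−‖y−ρx‖²/(2(1−ρ²))} dH^{d−1}(y). Suppose further that Σ′ ⊆ ℝ^d and N′ : Σ′ → ℝ^d is a unit vector field satisfying the first-variation condition ∇T_ρ(Σ_{k=1}^m u_k 1_{Ω_k})(x) = N′(x) · ‖∇T_ρ(Σ_{k=1}^m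 u_k 1_{Ω_k})(x)‖ for all x ∈ Σ′. Then for every v ∈ ℝ^d and every x ∈ Σ′, S(⟨v,N⟩)(x) = −⟨v, N′(x)⟩ · (1/ρ) · ‖∇T_ρ(Σ_{k=1}^m u_k 1_{Ω_k})(x)‖. -/
open MeasureTheory

open scoped MeasureTheory

open MeasureTheory Real Set
open scoped RealInnerProductSpace

set_option maxHeartbeats 1000000
set_option synthInstance.maxHeartbeats 1000000

namespace AlmostEigenAux

variable {d : ℕ}

local notation "E" => EuclideanSpace ℝ (Fin d)

/-- derivative of the centered Gaussian function -/
lemma hasFDerivAt_gaussFun (s : ℝ) (w : E) :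
    HasFDerivAt (fun z : E => Real.exp (-‖z‖ ^ 2 / (2 * s)))
      ((-(1 / s) * Real.exp (-‖w‖ ^ 2 / (2 * s))) • innerSL ℝ w) w := by
  have hsq : HasFDerivAt (fun z : E => ‖z‖ ^ 2) ((2 : ℝ) • innerSL ℝ w) w := by
    have h := (hasFDerivAt_id (𝕜 := ℝ) (x := w)).inner ℝ (hasFDerivAt_id (x := w))
    simp only [id_eq] at h
    have heq : (fun z : E => ⟪z, z⟫) = fun z : E => ‖z‖ ^ 2 := by
      funext z; rw [real_inner_self_eq_norm_sq]
    rw [heq] at h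
    refine h.congr_fderiv ?_
    ext z
    simp only [ContinuousLinearMap.smul_apply, innerSL_apply_apply, ContinuousLinearMap.comp_apply,
      ContinuousLinearMap.prod_apply, ContinuousLinearMap.coe_id', id_eq, fderivInnerCLM_apply,
      smul_eq_mul]
    rw [real_inner_comm w z]
    ring
  have hg : HasFDerivAt (fun z : E => -‖z‖ ^ 2 / (2 * s)) ((-(1 / s)) • innerSL ℝ w) w := by
    have h := hsq.const_mul (-(1 / (2 * s)))
    have heq : (fun z : E => -(1 / (2 * s)) * ‖z‖ ^ 2) = fun z : E => -‖z‖ ^ 2 / (2 * s) := by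
      funext z; ring
    rw [heq] at h
    refine h.congr_fderiv ?_
    rw [smul_smul]
    congr 1
    ring
  have h := hg.exp
  refine h.congr_fderiv ?_
  rw [smul_smul]
  congr 1
  ring


/-- derivative of the Gaussian kernel in the `x` variable -/
lemma hasFDerivAt_K_x (ρ s : ℝ) (y x : E) :
    HasFDerivAt (fun x : E => Real.exp (-‖y - ρ • x‖ ^ 2 / (2 * s)))
      ((ρ / s * Real.exp (-‖y - ρ • x‖ ^ 2 / (2 * s))) • innerSL ℝ (y - ρ • x)) x := by
  have hw : HasFDerivAt (fun x : E => y - ρ • x)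
      ((-ρ : ℝ) • ContinuousLinearMap.id ℝ (EuclideanSpace ℝ (Fin d))) x := by
    have h1 : HasFDerivAt (fun x : E => ρ • x) (ρ • ContinuousLinearMap.id ℝ _) x :=
      (hasFDerivAt_id x).const_smul ρ
    have h2 := (hasFDerivAt_const y x).sub h1
    refine h2.congr_fderiv ?_
    ext z
    simp [neg_smul]
  have h := (hasFDerivAt_gaussFun s (y - ρ • x)).comp x hw
  refine h.congr_fderiv ?_
  ext z
  simp only [ContinuousLinearMap.smul_apply, innerSL_apply_apply, ContinuousLinearMap.comp_apply,
    ContinuousLinearMap.coe_id', id_eq, smul_eq_mul, ContinuousLinearMap.coe_smul',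
    Pi.smul_apply]
  rw [real_inner_smul_right]
  ring

/-- derivative of the Gaussian kernel in the `y` variable -/
lemma hasFDerivAt_K_y (ρ s : ℝ) (x y : E) :
    HasFDerivAt (fun y : E => Real.exp (-‖y - ρ • x‖ ^ 2 / (2 * s)))
      ((-(1 / s) * Real.exp (-‖y - ρ • x‖ ^ 2 / (2 * s))) • innerSL ℝ (y - ρ • x)) y := by
  have hw : HasFDerivAt (fun y : E => y - ρ • x)
      (ContinuousLinearMap.id ℝ (EuclideanSpace ℝ (Fin d))) y := by
    simpa using (hasFDerivAt_id y).sub_const (ρ • x)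
  have h := (hasFDerivAt_gaussFun s (y - ρ • x)).comp y hw
  refine h.congr_fderiv ?_
  ext z
  simp

/-- computation of the divergence of the Gaussian-weighted constant vector field -/
lemma diverg_eq (ρ s : ℝ) (x v y : E) :
    diverg d (fun y : E => Real.exp (-‖y - ρ • x‖ ^ 2 / (2 * s)) • v) y
      = -(1 / s) * ⟪v, y - ρ • x⟫ * Real.exp (-‖y - ρ • x‖ ^ 2 / (2 * s)) := by
  have h := (hasFDerivAt_K_y (d := d) ρ s x y).smul_const v
  simp only [diverg]
  rw [h.fderiv]
  simp only [ContinuousLinearMap.smulRight_apply, ContinuousLinearMap.smul_apply,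
    innerSL_apply_apply, PiLp.smul_apply, smul_eq_mul]
  have : ∀ i : Fin d, ⟪y - ρ • x, EuclideanSpace.single i (1:ℝ)⟫ * v i
      = (y - ρ • x) i * v i := by
    intro i
    rw [EuclideanSpace.inner_single_right]
    simp
  calc (∑ i, -(1 / s) * rexp (-‖y - ρ • x‖ ^ 2 / (2 * s)) *
        ⟪y - ρ • x, EuclideanSpace.single i (1:ℝ)⟫ * v i)
      = -(1 / s) * rexp (-‖y - ρ • x‖ ^ 2 / (2 * s)) * ∑ i, (y - ρ • x) i * v i := by
        rw [Finset.mul_sum]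
        congr 1 with i
        rw [← this i]; ring
    _ = -(1 / s) * ⟪v, y - ρ • x⟫ * rexp (-‖y - ρ • x‖ ^ 2 / (2 * s)) := by
        rw [PiLp.inner_apply]
        simp only [RCLike.inner_apply, conj_trivial]
        ring


lemma integrable_gauss_norm {b : ℝ} (hb : 0 < b) (x₀ : E) :
    Integrable (fun y : E => Real.exp (-b * ‖y - x₀‖ ^ 2)) := by
  have hc := GaussianFourier.integrable_cexp_neg_mul_sq_norm_add (V := EuclideanSpace ℝ (Fin d))
      (b := (b : ℂ)) (by simpa using hb) 0 (0 : E)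
  have h : Integrable (fun v : E => Real.exp (-b * ‖v‖ ^ 2)) := by
    have hn := hc.norm
    refine hn.congr (Filter.Eventually.of_forall fun v => ?_)
    simp [Complex.norm_exp, ← Complex.ofReal_pow]
  exact h.comp_sub_right x₀

lemma key_bound {s : ℝ} (hs : 0 < s) {c a t : ℝ} (hc : 0 ≤ c) (ht : 0 ≤ t) :
    (t + c) * Real.exp ((a * t - t ^ 2) / (2 * s))
      ≤ (1 + c) * Real.exp (a ^ 2 / (4 * s) + 2 * s) * Real.exp (-(1 / (8 * s)) * t ^ 2) := by
  have h1 : t + c ≤ (1 + c) * Real.exp t := by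
    nlinarith [Real.add_one_le_exp t, Real.exp_pos t]
  have key : (a * t - t ^ 2) / (2 * s) + t ≤ a ^ 2 / (4 * s) + 2 * s + -(1 / (8 * s)) * t ^ 2 := by
    rw [← sub_nonneg]
    have heq : a ^ 2 / (4 * s) + 2 * s + -(1 / (8 * s)) * t ^ 2 - ((a * t - t ^ 2) / (2 * s) + t)
        = (2 * a ^ 2 + 16 * s ^ 2 - t ^ 2 - 4 * (a * t - t ^ 2) - 8 * s * t) / (8 * s) := by
      field_simp
      ring
    rw [heq]
    apply div_nonneg _ (by positivity)
    nlinarith [sq_nonneg (a - t), sq_nonneg (t - 4 * s)]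
  calc (t + c) * Real.exp ((a * t - t ^ 2) / (2 * s))
      ≤ ((1 + c) * Real.exp t) * Real.exp ((a * t - t ^ 2) / (2 * s)) :=
        mul_le_mul_of_nonneg_right h1 (Real.exp_nonneg _)
    _ = (1 + c) * Real.exp ((a * t - t ^ 2) / (2 * s) + t) := by
        rw [Real.exp_add]; ring
    _ ≤ (1 + c) * Real.exp (a ^ 2 / (4 * s) + 2 * s + -(1 / (8 * s)) * t ^ 2) := by
        apply mul_le_mul_of_nonneg_left (Real.exp_le_exp.2 key) (by positivity)
    _ = (1 + c) * Real.exp (a ^ 2 / (4 * s) + 2 * s) * Real.exp (-(1 / (8 * s)) * t ^ 2) := by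
        rw [mul_assoc, ← Real.exp_add]

lemma integrable_master {s c a : ℝ} (hs : 0 < s) (hc : 0 ≤ c) (x₀ : E) :
    Integrable (fun y : E =>
      (‖y - x₀‖ + c) * Real.exp ((a * ‖y - x₀‖ - ‖y - x₀‖ ^ 2) / (2 * s))) := by
  have hb : (0:ℝ) < 1 / (8 * s) := by positivity
  have hint := (integrable_gauss_norm hb x₀).const_mul
    ((1 + c) * Real.exp (a ^ 2 / (4 * s) + 2 * s))
  refine hint.mono' ?_ (Filter.Eventually.of_forall fun y => ?_)
  · apply Continuous.aestronglyMeasurable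
    fun_prop
  · have ht : (0:ℝ) ≤ ‖y - x₀‖ := norm_nonneg _
    rw [Real.norm_eq_abs, abs_of_nonneg (by positivity)]
    have := key_bound hs hc ht (a := a)
    calc (‖y - x₀‖ + c) * Real.exp ((a * ‖y - x₀‖ - ‖y - x₀‖ ^ 2) / (2 * s))
        ≤ (1 + c) * Real.exp (a ^ 2 / (4 * s) + 2 * s)
            * Real.exp (-(1 / (8 * s)) * ‖y - x₀‖ ^ 2) := this
      _ = (1 + c) * Real.exp (a ^ 2 / (4 * s) + 2 * s)
            * Real.exp (-(1 / (8 * s)) * ‖y - x₀‖ ^ 2) := rfl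

lemma integrable_K {s : ℝ} (hs : 0 < s) (z : E) :
    Integrable (fun y : E => Real.exp (-‖y - z‖ ^ 2 / (2 * s))) := by
  have h := integrable_gauss_norm (show (0:ℝ) < 1 / (2 * s) by positivity) z
  refine h.congr (Filter.Eventually.of_forall fun y => ?_)
  show Real.exp (-(1 / (2 * s)) * ‖y - z‖ ^ 2) = Real.exp (-‖y - z‖ ^ 2 / (2 * s))
  congr 1
  ring

lemma integrable_moment {s : ℝ} (hs : 0 < s) (z : E) :
    Integrable (fun y : E => ‖y - z‖ * Real.exp (-‖y - z‖ ^ 2 / (2 * s))) := by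
  have h := integrable_master (a := 0) hs (le_refl (0:ℝ)) z
  refine h.congr (Filter.Eventually.of_forall fun y => ?_)
  show (‖y - z‖ + 0) * Real.exp ((0 * ‖y - z‖ - ‖y - z‖ ^ 2) / (2 * s))
      = ‖y - z‖ * Real.exp (-‖y - z‖ ^ 2 / (2 * s))
  rw [add_zero]
  congr 2
  ring


lemma hasFDerivAt_conv (ρ : ℝ) {s : ℝ} (hs : 0 < s) (F : E → ℝ) (hFm : Measurable F)
    {B : ℝ} (hB : ∀ y, |F y| ≤ B) (x : E) :
    HasFDerivAt (fun x' : E => ∫ y : E, Real.exp (-‖y - ρ • x'‖ ^ 2 / (2 * s)) * F y)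
      (∫ y : E, F y • ((ρ / s * Real.exp (-‖y - ρ • x‖ ^ 2 / (2 * s))) • innerSL ℝ (y - ρ • x))) x
    ∧ Integrable (fun y : E =>
        F y • ((ρ / s * Real.exp (-‖y - ρ • x‖ ^ 2 / (2 * s))) • innerSL ℝ (y - ρ • x))) := by
  have hB0 : 0 ≤ B := le_trans (abs_nonneg (F x)) (hB x)
  set bound : E → ℝ := fun y => (B * (|ρ| / s)) *
    ((‖y - ρ • x‖ + |ρ|) * Real.exp ((2 * |ρ| * ‖y - ρ • x‖ - ‖y - ρ • x‖ ^ 2) / (2 * s)))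
    with hbound_def
  have hbound_int : Integrable bound :=
    (integrable_master (a := 2 * |ρ|) hs (abs_nonneg ρ) (ρ • x)).const_mul _
  have hb : ∀ y : E, ∀ x' ∈ Metric.ball x 1,
      ‖F y • ((ρ / s * Real.exp (-‖y - ρ • x'‖ ^ 2 / (2 * s))) • innerSL ℝ (y - ρ • x'))‖
        ≤ bound y := by
    intro y x' hx'
    have hw' : y - ρ • x' = (y - ρ • x) + ρ • (x - x') := by
      rw [smul_sub]; abel
    have he : ‖ρ • (x - x')‖ ≤ |ρ| := by
      rw [norm_smul, Real.norm_eq_abs]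
      have h1 : ‖x - x'‖ ≤ 1 := by
        have h2 := Metric.mem_ball.mp hx'
        rw [dist_eq_norm] at h2
        rw [← norm_neg, neg_sub]
        linarith
      exact mul_le_of_le_one_right (abs_nonneg ρ) h1
    have hle1 : ‖y - ρ • x'‖ ≤ ‖y - ρ • x‖ + |ρ| := by
      rw [hw']
      exact (norm_add_le _ _).trans (by linarith)
    have hKle : Real.exp (-‖y - ρ • x'‖ ^ 2 / (2 * s))
        ≤ Real.exp ((2 * |ρ| * ‖y - ρ • x‖ - ‖y - ρ • x‖ ^ 2) / (2 * s)) := by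
      apply Real.exp_le_exp.2
      have hnum : -‖y - ρ • x'‖ ^ 2 ≤ 2 * |ρ| * ‖y - ρ • x‖ - ‖y - ρ • x‖ ^ 2 := by
        have hexp : ‖y - ρ • x'‖ ^ 2 = ‖y - ρ • x‖ ^ 2
            + 2 * ⟪y - ρ • x, ρ • (x - x')⟫ + ‖ρ • (x - x')‖ ^ 2 := by
          rw [hw']; exact norm_add_sq_real _ _
        have h1 : -⟪y - ρ • x, ρ • (x - x')⟫ ≤ ‖y - ρ • x‖ * ‖ρ • (x - x')‖ :=
          le_trans (neg_le_abs _) (abs_real_inner_le_norm _ _)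
        have h2 : ‖y - ρ • x‖ * ‖ρ • (x - x')‖ ≤ ‖y - ρ • x‖ * |ρ| :=
          mul_le_mul_of_nonneg_left he (norm_nonneg _)
        nlinarith [sq_nonneg ‖ρ • (x - x')‖]
      gcongr
    have hnorm : ‖F y • ((ρ / s * Real.exp (-‖y - ρ • x'‖ ^ 2 / (2 * s))) •
          innerSL ℝ (y - ρ • x'))‖
        = |F y| * (|ρ| / s * Real.exp (-‖y - ρ • x'‖ ^ 2 / (2 * s)) * ‖y - ρ • x'‖) := by
      rw [norm_smul (F y)
          ((ρ / s * Real.exp (-‖y - ρ • x'‖ ^ 2 / (2 * s))) • innerSL ℝ (y - ρ • x')),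
        norm_smul (ρ / s * Real.exp (-‖y - ρ • x'‖ ^ 2 / (2 * s))) (innerSL ℝ (y - ρ • x')),
        innerSL_apply_norm, Real.norm_eq_abs, Real.norm_eq_abs,
        abs_mul, abs_div, abs_of_pos hs, abs_of_pos (Real.exp_pos _)]
    rw [hnorm, hbound_def]
    calc |F y| * (|ρ| / s * Real.exp (-‖y - ρ • x'‖ ^ 2 / (2 * s)) * ‖y - ρ • x'‖)
        ≤ B * (|ρ| / s * Real.exp (-‖y - ρ • x'‖ ^ 2 / (2 * s)) * ‖y - ρ • x'‖) :=
          mul_le_mul_of_nonneg_right (hB y) (by positivity)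
      _ = (B * (|ρ| / s)) * (Real.exp (-‖y - ρ • x'‖ ^ 2 / (2 * s)) * ‖y - ρ • x'‖) := by ring
      _ ≤ (B * (|ρ| / s)) * (Real.exp ((2 * |ρ| * ‖y - ρ • x‖ - ‖y - ρ • x‖ ^ 2) / (2 * s))
            * (‖y - ρ • x‖ + |ρ|)) := by
          apply mul_le_mul_of_nonneg_left _ (mul_nonneg hB0 (by positivity))
          exact mul_le_mul hKle hle1 (norm_nonneg _) (Real.exp_nonneg _)
      _ = (B * (|ρ| / s)) *
            ((‖y - ρ • x‖ + |ρ|) * Real.exp ((2 * |ρ| * ‖y - ρ • x‖ - ‖y - ρ • x‖ ^ 2) / (2 * s)))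
            := by ring
  have hcontK : ∀ x' : E, Continuous fun y : E => Real.exp (-‖y - ρ • x'‖ ^ 2 / (2 * s)) := by
    intro x'; fun_prop
  have hmeas' : AEStronglyMeasurable (fun y : E =>
      F y • ((ρ / s * Real.exp (-‖y - ρ • x‖ ^ 2 / (2 * s))) • innerSL ℝ (y - ρ • x)))
      (volume : Measure E) := by
    apply AEStronglyMeasurable.smul hFm.aestronglyMeasurable
    apply Continuous.aestronglyMeasurable
    apply Continuous.fun_smul
    · fun_prop
    · exact (innerSL ℝ).continuous.comp (by fun_prop)
  have hint0 : Integrable (fun y : E => Real.exp (-‖y - ρ • x‖ ^ 2 / (2 * s)) * F y) := by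
    refine ((integrable_K hs (ρ • x)).const_mul B).mono'
      (((hcontK x).aestronglyMeasurable).mul hFm.aestronglyMeasurable)
      (Filter.Eventually.of_forall fun y => ?_)
    rw [Real.norm_eq_abs, abs_mul, abs_of_pos (Real.exp_pos _)]
    calc Real.exp (-‖y - ρ • x‖ ^ 2 / (2 * s)) * |F y|
        ≤ Real.exp (-‖y - ρ • x‖ ^ 2 / (2 * s)) * B :=
          mul_le_mul_of_nonneg_left (hB y) (Real.exp_nonneg _)
      _ = B * Real.exp (-‖y - ρ • x‖ ^ 2 / (2 * s)) := by ring
  have hint' : Integrable (fun y : E =>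
      F y • ((ρ / s * Real.exp (-‖y - ρ • x‖ ^ 2 / (2 * s))) • innerSL ℝ (y - ρ • x))) :=
    hbound_int.mono' hmeas'
      (Filter.Eventually.of_forall fun y => hb y x (Metric.mem_ball_self one_pos))
  refine ⟨?_, hint'⟩
  exact hasFDerivAt_integral_of_dominated_of_fderiv_le (Metric.ball_mem_nhds x one_pos)
    (Filter.Eventually.of_forall fun x' =>
      ((hcontK x').aestronglyMeasurable).mul hFm.aestronglyMeasurable)
    hint0 hmeas'
    (Filter.Eventually.of_forall fun y => hb y)
    hbound_int
    (Filter.Eventually.of_forall fun y => fun x' _ =>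
      (hasFDerivAt_K_x ρ s y x').mul_const (F y))


lemma OU_rep (ρ : ℝ) (hρ₁ : -1 < ρ) (hρ₂ : ρ < 1) (F : E → ℝ) (x : E) :
    OU d ρ F x = (Real.sqrt (1 - ρ ^ 2) ^ d)⁻¹ * ((2 * Real.pi) ^ (-(d : ℝ) / 2) *
      ∫ y : E, Real.exp (-‖y - ρ • x‖ ^ 2 / (2 * (1 - ρ ^ 2))) * F y) := by
  have hs : 0 < 1 - ρ ^ 2 := by nlinarith
  set s := 1 - ρ ^ 2 with hsdef
  have hdens : Measurable fun z : E =>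
      Real.toNNReal ((2 * Real.pi) ^ (-(d : ℝ) / 2) * Real.exp (-‖z‖ ^ 2 / 2)) := by
    apply Measurable.real_toNNReal
    fun_prop
  set Φ : E → ℝ := fun w =>
    (2 * Real.pi) ^ (-(d : ℝ) / 2) * Real.exp (-‖w‖ ^ 2 / (2 * s)) * F (ρ • x + w) with hΦ
  have step1 : OU d ρ F x = ∫ z : E,
      ((2 * Real.pi) ^ (-(d : ℝ) / 2) * Real.exp (-‖z‖ ^ 2 / 2)) * F (ρ • x + Real.sqrt s • z) := by
    simp only [OU, gauss, ← hsdef]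
    rw [show (fun z : E =>
          ENNReal.ofReal ((2 * Real.pi) ^ (-(d : ℝ) / 2) * Real.exp (-‖z‖ ^ 2 / 2)))
        = fun z : E => ((Real.toNNReal ((2 * Real.pi) ^ (-(d : ℝ) / 2)
            * Real.exp (-‖z‖ ^ 2 / 2)) : NNReal) : ENNReal) from rfl]
    rw [integral_withDensity_eq_integral_smul hdens]
    refine integral_congr_ae (Filter.Eventually.of_forall fun z => ?_)
    simp only [NNReal.smul_def, smul_eq_mul]
    rw [Real.coe_toNNReal _ (by positivity)]
  have step2 : (∫ z : E, ((2 * Real.pi) ^ (-(d : ℝ) / 2) * Real.exp (-‖z‖ ^ 2 / 2))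
        * F (ρ • x + Real.sqrt s • z))
      = (Real.sqrt s ^ d)⁻¹ * ∫ w : E, Φ w := by
    have hcomp : ∀ z : E, ((2 * Real.pi) ^ (-(d : ℝ) / 2) * Real.exp (-‖z‖ ^ 2 / 2))
        * F (ρ • x + Real.sqrt s • z) = Φ (Real.sqrt s • z) := by
      intro z
      rw [hΦ]
      have hn : ‖Real.sqrt s • z‖ ^ 2 = s * ‖z‖ ^ 2 := by
        rw [norm_smul, Real.norm_eq_abs, abs_of_nonneg (Real.sqrt_nonneg s), mul_pow,
          Real.sq_sqrt hs.le]
      show _ = (2 * Real.pi) ^ (-(d : ℝ) / 2) * Real.exp (-‖Real.sqrt s • z‖ ^ 2 / (2 * s))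
          * F (ρ • x + Real.sqrt s • z)
      rw [hn]
      congr 2
      field_simp
    simp_rw [hcomp]
    rw [Measure.integral_comp_smul volume Φ (Real.sqrt s)]
    rw [finrank_euclideanSpace_fin, smul_eq_mul,
      abs_of_nonneg (inv_nonneg.2 (pow_nonneg (Real.sqrt_nonneg s) d))]
  have step3 : (∫ w : E, Φ w) = ∫ y : E,
      (2 * Real.pi) ^ (-(d : ℝ) / 2) * Real.exp (-‖y - ρ • x‖ ^ 2 / (2 * s)) * F y := by
    rw [← integral_add_left_eq_self (μ := (volume : Measure E))
      (fun y : E => (2 * Real.pi) ^ (-(d : ℝ) / 2)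
        * Real.exp (-‖y - ρ • x‖ ^ 2 / (2 * s)) * F y) (ρ • x)]
    refine integral_congr_ae (Filter.Eventually.of_forall fun w => ?_)
    rw [hΦ]
    show (2 * Real.pi) ^ (-(d : ℝ) / 2) * Real.exp (-‖w‖ ^ 2 / (2 * s)) * F (ρ • x + w)
      = (2 * Real.pi) ^ (-(d : ℝ) / 2)
          * Real.exp (-‖ρ • x + w - ρ • x‖ ^ 2 / (2 * s)) * F (ρ • x + w)
    rw [add_sub_cancel_left]
  rw [step1, step2, step3]
  congr 1
  rw [← integral_const_mul]
  refine integral_congr_ae (Filter.Eventually.of_forall fun y => ?_)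
  ring

end AlmostEigenAux

open MeasureTheory
open scoped MeasureTheory

theorem translations_as_almost_eigenfunctions
    (ρ : ℝ) (hρ₁ : -1 < ρ) (hρ₂ : ρ < 1) (hρ₀ : ρ ≠ 0) (d : ℕ) (hd : 2 ≤ d)
    (m : ℕ) (u : Fin m → ℝ)
    (Ω : Fin m → Set (EuclideanSpace ℝ (Fin d))) (hΩ : IsPartition d m Ω)
    (Sig : Fin m → Set (EuclideanSpace ℝ (Fin d))) (hSig : ∀ k, MeasurableSet (Sig k))
    (N : Fin m → EuclideanSpace ℝ (Fin d) → EuclideanSpace ℝ (Fin d))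
    (hNmeas : ∀ k, Measurable (N k)) (hNunit : ∀ k, ∀ y ∈ Sig k, ‖N k y‖ = 1)
    (hGG : ∀ (k : Fin m) (x v : EuclideanSpace ℝ (Fin d)),
      MeasureTheory.Integrable
        (fun y => (inner ℝ v (N k y) : ℝ) * Real.exp (-‖y - ρ • x‖ ^ 2 / (2 * (1 - ρ ^ 2))))
        ((μH[(d : ℝ) - 1]).restrict (Sig k)) ∧
      (∫ y in Ω k,
          diverg d (fun y => Real.exp (-‖y - ρ • x‖ ^ 2 / (2 * (1 - ρ ^ 2))) • v) y)
        = ∫ y in Sig k, (inner ℝ v (N k y) : ℝ) *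
            Real.exp (-‖y - ρ • x‖ ^ 2 / (2 * (1 - ρ ^ 2))) ∂(μH[(d : ℝ) - 1]))
    (Sig' : Set (EuclideanSpace ℝ (Fin d)))
    (N' : EuclideanSpace ℝ (Fin d) → EuclideanSpace ℝ (Fin d))
    (hN'unit : ∀ x ∈ Sig', ‖N' x‖ = 1)
    (hFirstVar : ∀ x ∈ Sig',
      gradient (OU d ρ (fun y => ∑ k, u k * Set.indicator (Ω k) (fun _ => (1 : ℝ)) y)) x =
        ‖gradient (OU d ρ (fun y => ∑ k, u k * Set.indicator (Ω k) (fun _ => (1 : ℝ)) y)) x‖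
          • N' x) :
    ∀ (v : EuclideanSpace ℝ (Fin d)), ∀ x ∈ Sig',
      ((1 - ρ ^ 2) ^ (-(d : ℝ) / 2) * (2 * Real.pi) ^ (-(d : ℝ) / 2) *
          ∑ k, u k * ∫ y in Sig k, (inner ℝ v (N k y) : ℝ) *
            Real.exp (-‖y - ρ • x‖ ^ 2 / (2 * (1 - ρ ^ 2))) ∂(μH[(d : ℝ) - 1]))
        = -(inner ℝ v (N' x) : ℝ) * (1 / ρ) *
            ‖gradient (OU d ρ (fun y => ∑ k, u k * Set.indicator (Ω k)
              (fun _ => (1 : ℝ)) y)) x‖ := by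
  intro v x hx
  have hs : 0 < 1 - ρ ^ 2 := by nlinarith
  set F : EuclideanSpace ℝ (Fin d) → ℝ :=
    fun y => ∑ k, u k * Set.indicator (Ω k) (fun _ => (1 : ℝ)) y with hFdef
  set B : ℝ := ∑ k, |u k| with hBdef
  have hFm : Measurable F := by
    apply Finset.measurable_sum
    intro k _
    exact ((measurable_const).indicator (hΩ.1 k)).const_mul (u k)
  have hFb : ∀ y, |F y| ≤ B := by
    intro y
    simp only [hFdef, hBdef]
    refine (Finset.abs_sum_le_sum_abs _ _).trans (Finset.sum_le_sum fun k _ => ?_)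
    rw [abs_mul]
    by_cases hy : y ∈ Ω k
    · simp [Set.indicator_of_mem hy]
    · simp [Set.indicator_of_notMem hy, abs_nonneg]
  set h : EuclideanSpace ℝ (Fin d) → ℝ := fun y =>
    -(1 / (1 - ρ ^ 2)) * (inner ℝ v (y - ρ • x) : ℝ) *
      Real.exp (-‖y - ρ • x‖ ^ 2 / (2 * (1 - ρ ^ 2))) with hhdef
  have hint_h : Integrable h := by
    refine ((AlmostEigenAux.integrable_moment hs (ρ • x)).const_mul
      ((1 / (1 - ρ ^ 2)) * ‖v‖)).mono' ?_ (Filter.Eventually.of_forall fun y => ?_)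
    · apply Continuous.aestronglyMeasurable
      apply Continuous.mul
      · exact continuous_const.mul (Continuous.inner continuous_const
          (continuous_id.sub continuous_const))
      · fun_prop
    · simp only [hhdef, Real.norm_eq_abs]
      rw [abs_mul, abs_mul, abs_of_pos (Real.exp_pos _)]
      have h1 : |(-(1 / (1 - ρ ^ 2)))| = 1 / (1 - ρ ^ 2) := by
        rw [abs_neg, abs_of_pos (by positivity)]
      rw [h1]
      have h2 : |(inner ℝ v (y - ρ • x) : ℝ)| ≤ ‖v‖ * ‖y - ρ • x‖ := abs_real_inner_le_norm _ _
      calc 1 / (1 - ρ ^ 2) * |(inner ℝ v (y - ρ • x) : ℝ)|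
            * Real.exp (-‖y - ρ • x‖ ^ 2 / (2 * (1 - ρ ^ 2)))
          ≤ 1 / (1 - ρ ^ 2) * (‖v‖ * ‖y - ρ • x‖)
            * Real.exp (-‖y - ρ • x‖ ^ 2 / (2 * (1 - ρ ^ 2))) := by
            apply mul_le_mul_of_nonneg_right _ (Real.exp_nonneg _)
            exact mul_le_mul_of_nonneg_left h2 (by positivity)
        _ = 1 / (1 - ρ ^ 2) * ‖v‖
            * (‖y - ρ • x‖ * Real.exp (-‖y - ρ • x‖ ^ 2 / (2 * (1 - ρ ^ 2)))) := by ring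
  have hsurf : ∀ k, (∫ y in Sig k, (inner ℝ v (N k y) : ℝ) *
        Real.exp (-‖y - ρ • x‖ ^ 2 / (2 * (1 - ρ ^ 2))) ∂(μH[(d : ℝ) - 1]))
      = ∫ y in Ω k, h y := by
    intro k
    rw [← (hGG k x v).2]
    refine integral_congr_ae (Filter.Eventually.of_forall fun y => ?_)
    simp only [hhdef]
    exact AlmostEigenAux.diverg_eq ρ (1 - ρ ^ 2) x v y
  have hsum : (∑ k, u k * ∫ y in Ω k, h y) = ∫ y, F y * h y := by
    have heq : ∀ y, F y * h y = ∑ k, u k * (Ω k).indicator h y := by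
      intro y
      simp only [hFdef, Finset.sum_mul]
      refine Finset.sum_congr rfl fun k _ => ?_
      by_cases hy : y ∈ Ω k
      · simp [Set.indicator_of_mem hy]
      · simp [Set.indicator_of_notMem hy]
    rw [show (∫ y, F y * h y) = ∫ y, ∑ k, u k * (Ω k).indicator h y from
      integral_congr_ae (Filter.Eventually.of_forall fun y => heq y)]
    rw [integral_finset_sum _ (fun k _ => (hint_h.indicator (hΩ.1 k)).const_mul (u k))]
    refine Finset.sum_congr rfl fun k _ => ?_
    rw [integral_const_mul, integral_indicator (hΩ.1 k)]
  have hc₁ : (1 - ρ ^ 2) ^ (-(d : ℝ) / 2) = (Real.sqrt (1 - ρ ^ 2) ^ d)⁻¹ := by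
    have h1 : Real.sqrt (1 - ρ ^ 2) ^ d = (1 - ρ ^ 2) ^ ((d : ℝ) / 2) := by
      rw [Real.sqrt_eq_rpow, ← Real.rpow_natCast ((1 - ρ ^ 2) ^ ((1 : ℝ) / 2)) d,
        ← Real.rpow_mul hs.le]
      congr 1
      ring
    rw [h1, neg_div, Real.rpow_neg hs.le]
  obtain ⟨hder, hint'⟩ := AlmostEigenAux.hasFDerivAt_conv (d := d) ρ hs F hFm hFb x
  set c : ℝ := (Real.sqrt (1 - ρ ^ 2) ^ d)⁻¹ * (2 * Real.pi) ^ (-(d : ℝ) / 2) with hcdef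
  set L : EuclideanSpace ℝ (Fin d) →L[ℝ] ℝ := ∫ y, F y •
    ((ρ / (1 - ρ ^ 2) * Real.exp (-‖y - ρ • x‖ ^ 2 / (2 * (1 - ρ ^ 2)))) •
      innerSL ℝ (y - ρ • x)) with hLdef
  have hOUder : HasFDerivAt (OU d ρ F) (c • L) x := by
    have hfe : OU d ρ F = fun x' => c * ∫ y,
        Real.exp (-‖y - ρ • x'‖ ^ 2 / (2 * (1 - ρ ^ 2))) * F y := by
      funext x'
      rw [AlmostEigenAux.OU_rep ρ hρ₁ hρ₂ F x', hcdef, mul_assoc]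
    rw [hfe]
    exact hder.const_mul c
  have hgradv : (inner ℝ (gradient (OU d ρ F) x) v : ℝ) = c * L v := by
    have hg : gradient (OU d ρ F) x
        = (InnerProductSpace.toDual ℝ _).symm (fderiv ℝ (OU d ρ F) x) := rfl
    rw [hg, InnerProductSpace.toDual_symm_apply, hOUder.fderiv]
    rfl
  have hLv : L v = -ρ * ∫ y, F y * h y := by
    rw [hLdef, ContinuousLinearMap.integral_apply hint' v, ← integral_const_mul]
    refine integral_congr_ae (Filter.Eventually.of_forall fun y => ?_)
    simp only [ContinuousLinearMap.smul_apply, innerSL_apply_apply, smul_eq_mul, hhdef]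
    rw [real_inner_comm (y - ρ • x) v]
    ring
  have hLHS : (∑ k, u k * ∫ y in Sig k, (inner ℝ v (N k y) : ℝ) *
        Real.exp (-‖y - ρ • x‖ ^ 2 / (2 * (1 - ρ ^ 2))) ∂(μH[(d : ℝ) - 1]))
      = ∫ y, F y * h y := by
    calc _ = ∑ k, u k * ∫ y in Ω k, h y :=
          Finset.sum_congr rfl fun k _ => by rw [hsurf k]
      _ = ∫ y, F y * h y := hsum
  have hFV := hFirstVar x hx
  have hgv : ‖gradient (OU d ρ F) x‖ * (inner ℝ (N' x) v : ℝ)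
      = c * (-ρ * ∫ y, F y * h y) := by
    calc ‖gradient (OU d ρ F) x‖ * (inner ℝ (N' x) v : ℝ)
        = (inner ℝ (‖gradient (OU d ρ F) x‖ • N' x) (v) : ℝ) :=
          (real_inner_smul_left _ _ _).symm
      _ = (inner ℝ (gradient (OU d ρ F) x) v : ℝ) := by rw [← hFV]
      _ = c * L v := hgradv
      _ = c * (-ρ * ∫ y, F y * h y) := by rw [hLv]
  rw [hLHS, hc₁, real_inner_comm (N' x) v]
  have hgoal : (Real.sqrt (1 - ρ ^ 2) ^ d)⁻¹ * (2 * Real.pi) ^ (-(d : ℝ) / 2)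
      * ∫ y, F y * h y = c * ∫ y, F y * h y := by rw [hcdef]
  have hre : -(inner ℝ (N' x) v : ℝ) * (1 / ρ) * ‖gradient (OU d ρ F) x‖
      = -(1 / ρ) * (‖gradient (OU d ρ F) x‖ * (inner ℝ (N' x) v : ℝ)) := by ring
  rw [hgoal, hre, hgv]
  field_simp
end
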